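/- arXiv:1411.7740 — 3 statements merged into one kernel-verified Lean document; each statement's English description precedes it below -/
import Mathlib

section
/- Let Γ be a simple graph on V = {1,…,n} with edge ideal I = I(Γ), let t ≥ 1, and let a ∈ ℕ^n. Then x^a ∈ Ĩ^t \ I^t (where Ĩ^t denotes the saturation of I^t) if and only if: (i) ν(Γ_a) < t, and (ii) ν(Γ_a − N_a(i)) ≥ t − deg_a(i) for all i ∈ V. -/
open MvPolynomial
open scoped Classical

noncomputable section

/-! ### Weighted graphs and matchings -/

/-- Number of times the vertex `v` appears in the multiset of edges `M`. -/
def edgeCount {α : Type*} (M : Multiset (Sym2 α)) (v : α) : ℕ :=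
  Multiset.countP (fun e => v ∈ e) M

/-- A matching of the weighted graph `(G, w)`: a family of edges of `G` (with repetitions
allowed) such that every vertex appears in these edges no more times than its weight.
Vertices of weight `0` are regarded as not belonging to the weighted graph. -/
def IsWMatching {α : Type*} (G : SimpleGraph α) (w : α → ℕ) (M : Multiset (Sym2 α)) : Prop :=
  (∀ e ∈ M, e ∈ G.edgeSet) ∧ ∀ v, edgeCount M v ≤ w v

/-- The matching number of the weighted graph `(G, w)`. -/
def nu {α : Type*} (G : SimpleGraph α) (w : α → ℕ) : ℕ :=
  sSup {m | ∃ M : Multiset (Sym2 α), IsWMatching G w M ∧ Multiset.card M = m}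

/-- `deg_w(i) = Σ_{j ∈ N_w(i)} w j`, the sum of the weights of the neighbours of `i`. -/
def wdeg {α : Type*} [Fintype α] (G : SimpleGraph α) (w : α → ℕ) (i : α) : ℕ :=
  ∑ j : α, if G.Adj i j then w j else 0

/-- The weighted graph obtained from `(G, w)` by deleting the (open) neighbourhood of `i`. -/
def delNbr {α : Type*} (G : SimpleGraph α) (w : α → ℕ) (i : α) : α → ℕ :=
  fun j => if G.Adj i j then 0 else w j

/-- The weighted graph obtained from `(G, w)` by deleting the vertices of `N`. -/
def delSet {α : Type*} (w : α → ℕ) (N : Set α) : α → ℕ :=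
  fun j => if j ∈ N then 0 else w j

/-- A weighted graph `H = (G, w)` is `t`-saturating if `ν(H) < t` and
`ν(H − N_H(i)) ≥ t − deg_H(i)` for every vertex `i` of `H`. -/
def TSaturating {α : Type*} [Fintype α] (G : SimpleGraph α) (w : α → ℕ) (t : ℕ) : Prop :=
  nu G w < t ∧ ∀ i, 0 < w i → t ≤ nu G (delNbr G w i) + wdeg G w i

/-- A weighted graph `H = (G, w)` is strongly `t`-saturating if `ν(H) < t` and
`ν(H − j) ≥ t − w j` for every vertex `j` of `H`. -/
def StronglyTSaturating {α : Type*} (G : SimpleGraph α) (w : α → ℕ) (t : ℕ) : Prop :=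
  nu G w < t ∧ ∀ j, 0 < w j → t ≤ nu G (delSet w {j}) + w j

/-! ### Covers, cores, neighbourhoods -/

/-- A (vertex) cover of a graph. -/
def IsVCover {α : Type*} (G : SimpleGraph α) (F : Set α) : Prop :=
  ∀ ⦃i j⦄, G.Adj i j → i ∈ F ∨ j ∈ F

/-- A minimal (vertex) cover of a graph. -/
def IsMinimalVCover {α : Type*} (G : SimpleGraph α) (F : Set α) : Prop :=
  IsVCover G F ∧ ∀ F', IsVCover G F' → F' ⊆ F → F' = F

/-- `core(F)`: the set of vertices of `F` which are not adjacent to any vertex outside `F`. -/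
def graphCore {α : Type*} (G : SimpleGraph α) (F : Set α) : Set α :=
  {i | i ∈ F ∧ ∀ j, G.Adj i j → j ∈ F}

/-- The closed neighbourhood `N[U]` of a set of vertices `U`. -/
def closedNbhd {α : Type*} (G : SimpleGraph α) (U : Set α) : Set α :=
  U ∪ {v | ∃ u ∈ U, G.Adj u v}

/-- `F` is minimal among the covers of `G` containing `S`. -/
def MinimalCoverOver {α : Type*} (G : SimpleGraph α) (S F : Set α) : Prop :=
  IsVCover G F ∧ S ⊆ F ∧ ∀ F', IsVCover G F' → S ⊆ F' → F' ⊆ F → F' = F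

/-- `W` is a dominating set: every vertex outside `W` is adjacent to a vertex of `W`. -/
def IsDominating {α : Type*} (G : SimpleGraph α) (W : Set α) : Prop :=
  ∀ v, v ∉ W → ∃ u ∈ W, G.Adj u v

/-- Every connected component of `H` contains an odd cycle of length at most `L`. -/
def ComponentOddCycleLe {β : Type*} (H : SimpleGraph β) (L : ℕ) : Prop :=
  ∀ c : H.ConnectedComponent, ∃ (v : β) (cyc : H.Walk v v),
    H.connectedComponentMk v = c ∧ cyc.IsCycle ∧ Odd cyc.length ∧ cyc.length ≤ L

/-- Every connected component of `H` contains an odd cycle. -/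
def ComponentOddCycle {β : Type*} (H : SimpleGraph β) : Prop :=
  ∀ c : H.ConnectedComponent, ∃ (v : β) (cyc : H.Walk v v),
    H.connectedComponentMk v = c ∧ cyc.IsCycle ∧ Odd cyc.length

/-! ### Edge ideals -/

/-- The edge ideal of a simple graph. -/
def edgeIdeal (k : Type*) [CommRing k] {σ : Type*} (G : SimpleGraph σ) :
    Ideal (MvPolynomial σ k) :=
  Ideal.span {p | ∃ i j, G.Adj i j ∧ p = X i * X j}

/-- The maximal homogeneous ideal `(x_1, …, x_n)`. -/
def maxIdeal (k : Type*) [CommRing k] (σ : Type*) : Ideal (MvPolynomial σ k) :=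
  Ideal.span (Set.range (X : σ → MvPolynomial σ k))

/-- `P_F`, the ideal generated by the variables `x_i`, `i ∈ F`. -/
def varIdeal (k : Type*) [CommRing k] {σ : Type*} (F : Set σ) : Ideal (MvPolynomial σ k) :=
  Ideal.span ((fun i => (X i : MvPolynomial σ k)) '' F)

/-- The monomial `x^a`. -/
def monom (k : Type*) [CommRing k] {n : ℕ} (a : Fin n → ℕ) : MvPolynomial (Fin n) k :=
  ∏ i : Fin n, (X i : MvPolynomial (Fin n) k) ^ a i

/-- `f` belongs to the saturation `J̃ = ⋃_{m ≥ 1} (J : 𝔪^m)` of `J`. -/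
def inSaturation (k : Type*) [CommRing k] {σ : Type*} (J : Ideal (MvPolynomial σ k))
    (f : MvPolynomial σ k) : Prop :=
  ∃ m : ℕ, f ∈ Submodule.colon J (((maxIdeal k σ) ^ m : Ideal (MvPolynomial σ k)) : Set (MvPolynomial σ k))

/-- `P` is an associated prime of the ideal `J`, i.e. of the module `R ⧸ J`. -/
def assocPrime {R : Type*} [CommRing R] (J P : Ideal R) : Prop :=
  P ∈ associatedPrimes R (R ⧸ J)

/-- `P` is an embedded associated prime of `J`: an associated prime of `R ⧸ J` which is
not a minimal prime of `J`. -/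
def embeddedAssocPrime {R : Type*} [CommRing R] (J P : Ideal R) : Prop :=
  assocPrime J P ∧ P ∉ J.minimalPrimes

/-- The five configurations appearing in the description of `Ass(I³)`: a triangle; a union
of an edge and a triangle meeting at exactly one vertex; a union of two vertex-disjoint
triangles with no edges between them; a union of two triangles meeting at exactly one
vertex; a pentagon. `W` is the vertex set of the subgraph. -/
def Config3 {α : Type*} (G : SimpleGraph α) (W : Set α) : Prop :=
  (∃ u v w : α, u ≠ v ∧ u ≠ w ∧ v ≠ w ∧ G.Adj u v ∧ G.Adj v w ∧ G.Adj u w ∧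
    W = {u, v, w}) ∨
  (∃ i j h v : α, [i, j, h, v].Pairwise (· ≠ ·) ∧ G.Adj i j ∧ G.Adj j h ∧ G.Adj i h ∧
    G.Adj i v ∧ W = {i, j, h, v}) ∨
  (∃ u₁ v₁ w₁ u₂ v₂ w₂ : α, [u₁, v₁, w₁, u₂, v₂, w₂].Pairwise (· ≠ ·) ∧
    G.Adj u₁ v₁ ∧ G.Adj v₁ w₁ ∧ G.Adj u₁ w₁ ∧ G.Adj u₂ v₂ ∧ G.Adj v₂ w₂ ∧ G.Adj u₂ w₂ ∧
    (∀ x ∈ ({u₁, v₁, w₁} : Set α), ∀ y ∈ ({u₂, v₂, w₂} : Set α), ¬ G.Adj x y) ∧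
    W = {u₁, v₁, w₁, u₂, v₂, w₂}) ∨
  (∃ i j h u v : α, [i, j, h, u, v].Pairwise (· ≠ ·) ∧
    G.Adj i j ∧ G.Adj j h ∧ G.Adj i h ∧ G.Adj i u ∧ G.Adj u v ∧ G.Adj i v ∧
    W = {i, j, h, u, v}) ∨
  (∃ p : Fin 5 → α, Function.Injective p ∧ (∀ i : Fin 5, G.Adj (p i) (p (i + 1))) ∧
    W = Set.range p)

end

noncomputable section AuxLemmas

open Multiset in
lemma edgeCount_add {α : Type*} (A B : Multiset (Sym2 α)) (v : α) :
    edgeCount (A + B) v = edgeCount A v + edgeCount B v := Multiset.countP_add _ _ _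

lemma edgeCount_le_of_le {α : Type*} {A B : Multiset (Sym2 α)} (h : A ≤ B) (v : α) :
    edgeCount A v ≤ edgeCount B v := Multiset.countP_le_of_le _ h

lemma card_le_sum_edgeCount {α : Type*} (F : Finset α) (M : Multiset (Sym2 α))
    (h : ∀ e ∈ M, ∃ v ∈ F, v ∈ e) :
    Multiset.card M ≤ ∑ v ∈ F, edgeCount M v := by
  induction M using Multiset.induction with
  | empty => simp [edgeCount]
  | cons e M ih =>
    have hsum : ∀ v, edgeCount (e ::ₘ M) v = edgeCount M v + (if v ∈ e then 1 else 0) := by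
      intro v; simp [edgeCount, Multiset.countP_cons]
    simp only [Multiset.card_cons, hsum, Finset.sum_add_distrib]
    have h1 : (1 : ℕ) ≤ ∑ v ∈ F, (if v ∈ e then 1 else 0) := by
      obtain ⟨v, hvF, hve⟩ := h e (Multiset.mem_cons_self _ _)
      calc (1:ℕ) = ∑ x ∈ {v}, (if x ∈ e then 1 else 0) := by rw [Finset.sum_singleton, if_pos hve]
      _ ≤ _ := Finset.sum_le_sum_of_subset (by simpa using hvF)
    have h2 := ih (fun e' he' => h e' (Multiset.mem_cons_of_mem he'))
    omega

lemma IsWMatching.mono {α : Type*} {G : SimpleGraph α} {w : α → ℕ} {A B : Multiset (Sym2 α)}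
    (hB : IsWMatching G w B) (h : A ≤ B) : IsWMatching G w A :=
  ⟨fun e he => hB.1 e (Multiset.mem_of_le h he),
   fun v => le_trans (edgeCount_le_of_le h v) (hB.2 v)⟩

lemma IsWMatching.card_le {α : Type*} [Fintype α] {G : SimpleGraph α} {w : α → ℕ}
    {M : Multiset (Sym2 α)} (hM : IsWMatching G w M) :
    Multiset.card M ≤ ∑ v, w v := by
  refine le_trans (card_le_sum_edgeCount Finset.univ M ?_) (Finset.sum_le_sum fun v _ => hM.2 v)
  intro e _
  induction e using Sym2.ind with
  | _ u v => exact ⟨u, Finset.mem_univ u, by simp⟩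

lemma nu_bddAbove {α : Type*} [Fintype α] (G : SimpleGraph α) (w : α → ℕ) :
    BddAbove {m | ∃ M : Multiset (Sym2 α), IsWMatching G w M ∧ Multiset.card M = m} :=
  ⟨∑ v, w v, fun m ⟨M, hM, hc⟩ => hc ▸ hM.card_le⟩

lemma nu_nonempty {α : Type*} (G : SimpleGraph α) (w : α → ℕ) :
    Set.Nonempty {m | ∃ M : Multiset (Sym2 α), IsWMatching G w M ∧ Multiset.card M = m} :=
  ⟨0, 0, ⟨fun e he => absurd he (Multiset.notMem_zero e), fun v => by simp [edgeCount]⟩, rfl⟩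

lemma exists_matching_card_of_le {α : Type*} {G : SimpleGraph α} {w : α → ℕ}
    {M : Multiset (Sym2 α)} (hM : IsWMatching G w M) {t : ℕ} (ht : t ≤ Multiset.card M) :
    ∃ M', IsWMatching G w M' ∧ Multiset.card M' = t := by
  refine ⟨(M.toList.take t : List (Sym2 _)), hM.mono ?_, ?_⟩
  · calc ((M.toList.take t : List (Sym2 _)) : Multiset _) ≤ (M.toList : Multiset _) :=
        Multiset.coe_le.2 (M.toList.take_sublist t).subperm
    _ = M := M.coe_toList
  · simp only [Multiset.coe_card, List.length_take]
    rw [Multiset.length_toList]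
    omega

lemma le_nu_iff {α : Type*} [Fintype α] {G : SimpleGraph α} {w : α → ℕ} {t : ℕ} :
    t ≤ nu G w ↔ ∃ M, IsWMatching G w M ∧ Multiset.card M = t := by
  constructor
  · intro h
    have hmem := Nat.sSup_mem (nu_nonempty G w) (nu_bddAbove G w)
    obtain ⟨M, hM, hc⟩ := hmem
    exact exists_matching_card_of_le hM (by rw [hc]; exact h)
  · rintro ⟨M, hM, rfl⟩
    exact le_csSup (nu_bddAbove G w) ⟨M, hM, rfl⟩

end AuxLemmas
noncomputable section AuxAlg

/-- The exponent vector of an edge. -/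
def eVec {α : Type*} : Sym2 α → (α →₀ ℕ) :=
  Sym2.lift ⟨fun u v => Finsupp.single u 1 + Finsupp.single v 1, fun u v => add_comm _ _⟩

lemma eVec_mk {α : Type*} (u v : α) :
    eVec s(u, v) = Finsupp.single u 1 + Finsupp.single v 1 := rfl

lemma eVec_apply {α : Type*} {G : SimpleGraph α} {e : Sym2 α} (he : e ∈ G.edgeSet) (w : α) :
    eVec e w = if w ∈ e then 1 else 0 := by
  induction e using Sym2.ind with
  | _ u v =>
    have huv : u ≠ v := (G.mem_edgeSet.mp he).ne
    rw [eVec_mk]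
    rw [Finsupp.add_apply, Finsupp.single_apply, Finsupp.single_apply]
    simp only [Sym2.mem_iff]
    split_ifs <;> simp_all [eq_comm]

lemma ideal_span_image_pow {σ : Type*} (k : Type*) [Field k] (E : Set (σ →₀ ℕ)) (t : ℕ) :
    (Ideal.span ((fun s => MvPolynomial.monomial s (1:k)) '' E)) ^ t =
      Ideal.span ((fun s => MvPolynomial.monomial s (1:k)) ''
        {s | ∃ l : List (σ →₀ ℕ), (∀ x ∈ l, x ∈ E) ∧ l.length = t ∧ l.sum = s}) := by
  induction t with
  | zero =>
    rw [pow_zero, Ideal.one_eq_top]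
    have hset : {s : σ →₀ ℕ | ∃ l : List (σ →₀ ℕ), (∀ x ∈ l, x ∈ E) ∧ l.length = 0 ∧ l.sum = s}
        = {0} := by
      ext s
      constructor
      · rintro ⟨l, -, hl, rfl⟩
        rw [List.length_eq_zero_iff] at hl
        simp [hl]
      · rintro rfl
        exact ⟨[], by simp, rfl, rfl⟩
    rw [hset]
    have : ((fun s => MvPolynomial.monomial s (1:k)) '' ({0} : Set (σ →₀ ℕ)))
        = ({1} : Set (MvPolynomial σ k)) := by
      simp [MvPolynomial.monomial_zero']
    rw [this, Ideal.span_singleton_one]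
  | succ t ih =>
    rw [pow_succ', ih, Ideal.span_mul_span']
    congr 1
    ext p
    constructor
    · rintro ⟨x, ⟨c, hc, rfl⟩, y, ⟨s, ⟨l, hl, hlen, rfl⟩, rfl⟩, rfl⟩
      refine ⟨c + l.sum, ⟨c :: l, ?_, by simp [hlen], by simp⟩, ?_⟩
      · intro x hx
        rcases List.mem_cons.mp hx with rfl | hx
        · exact hc
        · exact hl x hx
      · simp [MvPolynomial.monomial_mul]
    · rintro ⟨s, ⟨l, hl, hlen, rfl⟩, rfl⟩
      cases l with
      | nil => simp at hlen
      | cons c l =>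
        refine ⟨MvPolynomial.monomial c 1, ⟨c, hl c List.mem_cons_self, rfl⟩,
          MvPolynomial.monomial l.sum 1,
          ⟨l.sum, ⟨l, fun x hx => hl x (List.mem_cons_of_mem _ hx), by simpa using hlen, rfl⟩,
            rfl⟩, ?_⟩
        simp [MvPolynomial.monomial_mul]

lemma monom_eq_monomial {n : ℕ} (k : Type*) [Field k] (a : Fin n → ℕ) :
    monom k a = MvPolynomial.monomial (Finsupp.equivFunOnFinite.symm a) (1:k) := by
  rw [MvPolynomial.monomial_eq, MvPolynomial.C_1, one_mul,
    Finsupp.prod_fintype _ _ (fun i => pow_zero _)]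
  rfl

end AuxAlg
noncomputable section AuxMem


lemma monomial_edge {σ : Type*} (k : Type*) [Field k] (i j : σ) :
    MvPolynomial.monomial (Finsupp.single i 1 + Finsupp.single j 1) (1:k) =
      MvPolynomial.X i * MvPolynomial.X j := by
  have h1 : (MvPolynomial.X i : MvPolynomial σ k) =
      MvPolynomial.monomial (Finsupp.single i 1) 1 := by
    rw [← MvPolynomial.X_pow_eq_monomial, pow_one]
  have h2 : (MvPolynomial.X j : MvPolynomial σ k) =
      MvPolynomial.monomial (Finsupp.single j 1) 1 := by
    rw [← MvPolynomial.X_pow_eq_monomial, pow_one]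
  rw [h1, h2, MvPolynomial.monomial_mul, one_mul]

lemma sum_eVec_apply {α : Type*} {G : SimpleGraph α} (L : List (Sym2 α))
    (hL : ∀ e ∈ L, e ∈ G.edgeSet) (v : α) :
    ((L.map eVec).sum) v = edgeCount (L : Multiset (Sym2 α)) v := by
  induction L with
  | nil => simp [edgeCount]
  | cons e L ih =>
    have he : e ∈ G.edgeSet := hL e List.mem_cons_self
    have hL' : ∀ e' ∈ L, e' ∈ G.edgeSet := fun e' he' => hL e' (List.mem_cons_of_mem _ he')
    simp only [List.map_cons, List.sum_cons, Finsupp.add_apply, ih hL']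
    rw [eVec_apply he]
    show _ = Multiset.countP _ (e ::ₘ (L : Multiset (Sym2 α)))
    rw [Multiset.countP_cons]
    simp only [edgeCount]
    split_ifs <;> omega

lemma exists_edge_list {n : ℕ} {G : SimpleGraph (Fin n)} (l : List (Fin n →₀ ℕ))
    (hl : ∀ x ∈ l, x ∈ eVec '' G.edgeSet) :
    ∃ L : List (Sym2 (Fin n)), (∀ e ∈ L, e ∈ G.edgeSet) ∧ L.map eVec = l := by
  induction l with
  | nil => exact ⟨[], by simp, rfl⟩
  | cons x l ih =>
    obtain ⟨e, he, hex⟩ := hl x List.mem_cons_self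
    obtain ⟨L, hL, hmap⟩ := ih (fun y hy => hl y (List.mem_cons_of_mem _ hy))
    refine ⟨e :: L, ?_, by simp [hex, hmap]⟩
    intro e' he'
    rcases List.mem_cons.mp he' with rfl | h
    · exact he
    · exact hL e' h

lemma edgeIdeal_eq_span {n : ℕ} (k : Type*) [Field k] (G : SimpleGraph (Fin n)) :
    edgeIdeal k G =
      Ideal.span ((fun s => MvPolynomial.monomial s (1:k)) '' (eVec '' G.edgeSet)) := by
  unfold edgeIdeal
  congr 1
  ext p
  constructor
  · rintro ⟨i, j, hij, rfl⟩
    refine ⟨eVec s(i,j), ⟨s(i,j), G.mem_edgeSet.mpr hij, rfl⟩, ?_⟩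
    rw [eVec_mk]
    exact monomial_edge k i j
  · rintro ⟨s, ⟨e, he, rfl⟩, rfl⟩
    induction e using Sym2.ind with
    | _ i j =>
      refine ⟨i, j, G.mem_edgeSet.mp he, ?_⟩
      rw [eVec_mk]
      exact monomial_edge k i j

lemma monom_mem_pow_iff {n : ℕ} (k : Type*) [Field k] (G : SimpleGraph (Fin n))
    (a : Fin n → ℕ) (t : ℕ) :
    monom k a ∈ (edgeIdeal k G) ^ t ↔
      ∃ M : Multiset (Sym2 (Fin n)), IsWMatching G a M ∧ Multiset.card M = t := by
  rw [edgeIdeal_eq_span, ideal_span_image_pow, monom_eq_monomial,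
    MvPolynomial.mem_ideal_span_monomial_image]
  have hsupp : (MvPolynomial.monomial (Finsupp.equivFunOnFinite.symm a) (1:k)).support
      = {Finsupp.equivFunOnFinite.symm a} := by
    rw [MvPolynomial.support_monomial, if_neg one_ne_zero]
  rw [hsupp]
  simp only [Finset.mem_singleton, forall_eq]
  constructor
  · rintro ⟨s, ⟨l, hl, hlen, rfl⟩, hle⟩
    obtain ⟨L, hL, rfl⟩ := exists_edge_list l hl
    refine ⟨(L : Multiset (Sym2 (Fin n))), ⟨fun e he => hL e (by simpa using he), ?_⟩, by
      simpa using hlen⟩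
    intro v
    have := hle v
    rw [sum_eVec_apply L hL v] at this
    simpa using this
  · rintro ⟨M, ⟨hM1, hM2⟩, rfl⟩
    set L := M.toList with hLdef
    have hL : ∀ e ∈ L, e ∈ G.edgeSet := fun e he => hM1 e (by rwa [← Multiset.mem_toList])
    refine ⟨(L.map eVec).sum, ⟨L.map eVec, ?_, by simp [hLdef], rfl⟩, ?_⟩
    · rintro x hx
      obtain ⟨e, he, rfl⟩ := List.mem_map.mp hx
      exact ⟨e, hL e he, rfl⟩
    · intro v
      rw [sum_eVec_apply L hL v]
      have : (L : Multiset (Sym2 (Fin n))) = M := Multiset.coe_toList M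
      rw [this]
      simpa using hM2 v

end AuxMem
noncomputable section AuxConstr

lemma edgeCount_sum {α β : Type*} (F : Finset β) (g : β → Multiset (Sym2 α)) (v : α) :
    edgeCount (∑ j ∈ F, g j) v = ∑ j ∈ F, edgeCount (g j) v := by
  classical
  induction F using Finset.induction with
  | empty => simp [edgeCount]
  | insert _ _ h ih => rw [Finset.sum_insert h, Finset.sum_insert h, edgeCount_add, ih]

lemma card_multiset_sum {α β : Type*} (F : Finset β) (g : β → Multiset α) :
    Multiset.card (∑ j ∈ F, g j) = ∑ j ∈ F, Multiset.card (g j) := by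
  classical
  induction F using Finset.induction with
  | empty => simp
  | insert _ _ h ih => rw [Finset.sum_insert h, Finset.sum_insert h, Multiset.card_add, ih]

lemma edgeCount_replicate {α : Type*} (m : ℕ) (e : Sym2 α) (v : α) :
    edgeCount (Multiset.replicate m e) v = if v ∈ e then m else 0 := by
  induction m with
  | zero => simp [edgeCount]
  | succ m ih =>
    rw [Multiset.replicate_succ]
    show Multiset.countP _ _ = _
    rw [Multiset.countP_cons]
    simp only [edgeCount] at ih
    rw [ih]
    split_ifs <;> omega

lemma exists_pointwise_le_sum {n : ℕ} (c : Fin n → ℕ) (s : ℕ) (hs : s ≤ ∑ v, c v) :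
    ∃ c' : Fin n → ℕ, (∀ v, c' v ≤ c v) ∧ ∑ v, c' v = s := by
  induction s with
  | zero => exact ⟨0, fun v => Nat.zero_le _, by simp⟩
  | succ s ih =>
    obtain ⟨c', hle, hsum⟩ := ih (le_trans (Nat.le_succ s) hs)
    have hlt : ∃ v, c' v < c v := by
      by_contra h
      push_neg at h
      have : ∑ v, c v ≤ ∑ v, c' v := Finset.sum_le_sum (fun v _ => h v)
      omega
    obtain ⟨v0, hv0⟩ := hlt
    refine ⟨Function.update c' v0 (c' v0 + 1), ?_, ?_⟩
    · intro v
      rcases eq_or_ne v v0 with rfl | h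
      · rw [Function.update_self]; omega
      · rw [Function.update_of_ne h]; exact hle v
    · rw [Finset.sum_update_of_mem (Finset.mem_univ v0)]
      have hsd : Finset.univ \ {v0} = Finset.univ.erase v0 := by
        rw [Finset.sdiff_singleton_eq_erase]
      have he : c' v0 + ∑ v ∈ Finset.univ.erase v0, c' v = ∑ v, c' v :=
        Finset.add_sum_erase _ _ (Finset.mem_univ v0)
      rw [hsd]
      omega

/-- Key construction: if `t ≤ ν(Γ_a − N_a(i0)) + deg_a(i0)` and the extra weight at `i0`
is at least `t`, then the graph weighted by `a + b` has a matching of size `t`. -/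
lemma exists_matching_of_star {n : ℕ} {G : SimpleGraph (Fin n)} {a : Fin n → ℕ} {t : ℕ}
    (i0 : Fin n) (hcond : t ≤ nu G (delNbr G a i0) + wdeg G a i0)
    (b : Fin n → ℕ) (hb : t ≤ b i0) :
    ∃ M, IsWMatching G (fun v => a v + b v) M ∧ Multiset.card M = t := by
  set d := wdeg G a i0 with hd
  set ee := min t d with hee
  have hee_t : ee ≤ t := min_le_left _ _
  have hee_d : ee ≤ d := min_le_right _ _
  have her : t - ee ≤ nu G (delNbr G a i0) := by
    rcases le_total t d with h | h
    · have : ee = t := min_eq_left h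
      omega
    · have : ee = d := min_eq_right h
      omega
  obtain ⟨M₂, hM₂, hcard₂⟩ := le_nu_iff.mp her
  set c : Fin n → ℕ := fun j => if G.Adj i0 j then a j else 0 with hc
  have hsum_c : ∑ v, c v = d := rfl
  obtain ⟨c', hc'le, hc'sum⟩ := exists_pointwise_le_sum c ee (by rw [hsum_c]; exact hee_d)
  set M₁ : Multiset (Sym2 (Fin n)) :=
    ∑ j : Fin n, Multiset.replicate (c' j) s(i0, j) with hM₁def
  have hmemM₁ : ∀ e ∈ M₁, ∃ j, c' j ≠ 0 ∧ e = s(i0, j) := by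
    intro e he
    rw [hM₁def, Multiset.mem_sum] at he
    obtain ⟨j, -, hj⟩ := he
    obtain ⟨hne, rfl⟩ := Multiset.mem_replicate.mp hj
    exact ⟨j, hne, rfl⟩
  have hadj : ∀ j, c' j ≠ 0 → G.Adj i0 j := by
    intro j hj
    by_contra h
    have : c j = 0 := by simp [hc, h]
    have := hc'le j
    omega
  have hcount₁ : ∀ v, edgeCount M₁ v = if v = i0 then ee else c' v := by
    intro v
    rw [hM₁def, edgeCount_sum]
    rcases eq_or_ne v i0 with rfl | hv
    · rw [if_pos rfl, ← hc'sum]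
      refine Finset.sum_congr rfl (fun j _ => ?_)
      rw [edgeCount_replicate, if_pos (by simp)]
    · rw [if_neg hv]
      have : ∀ j, edgeCount (Multiset.replicate (c' j) s(i0, j)) v
          = if j = v then c' j else 0 := by
        intro j
        rw [edgeCount_replicate]
        have : v ∈ s(i0, j) ↔ j = v := by
          simp only [Sym2.mem_iff]
          constructor
          · rintro (rfl | rfl)
            · exact absurd rfl hv
            · rfl
          · rintro rfl; right; rfl
        simp only [this]
      simp only [this]
      simp
  have hcard₁ : Multiset.card M₁ = ee := by
    rw [hM₁def, card_multiset_sum]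
    simp only [Multiset.card_replicate]
    exact hc'sum
  refine ⟨M₁ + M₂, ⟨?_, ?_⟩, by rw [Multiset.card_add, hcard₁, hcard₂]; omega⟩
  · intro e he
    rcases Multiset.mem_add.mp he with h | h
    · obtain ⟨j, hj, rfl⟩ := hmemM₁ e h
      exact G.mem_edgeSet.mpr (hadj j hj)
    · exact hM₂.1 e h
  · intro v
    show edgeCount (M₁ + M₂) v ≤ a v + b v
    rw [edgeCount_add, hcount₁]
    have h2 := hM₂.2 v
    rcases eq_or_ne v i0 with rfl | hv
    · rw [if_pos rfl]
      have : delNbr G a v v = a v := by simp [delNbr]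
      omega
    · rw [if_neg hv]
      by_cases hadjv : G.Adj i0 v
      · have hdel : delNbr G a i0 v = 0 := by simp [delNbr, hadjv]
        have := hc'le v
        have hcv : c v = a v := by simp [hc, hadjv]
        omega
      · have hdel : delNbr G a i0 v = a v := by simp [delNbr, hadjv]
        have := hc'le v
        have hcv : c v = 0 := by simp [hc, hadjv]
        omega

end AuxConstr
noncomputable section AuxSat

lemma monom_mul_monomial {n : ℕ} (k : Type*) [Field k] (a : Fin n → ℕ) (s : Fin n →₀ ℕ) :
    monom k a * MvPolynomial.monomial s 1 = monom k (fun v => a v + s v) := by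
  rw [monom_eq_monomial, monom_eq_monomial, MvPolynomial.monomial_mul, one_mul]
  have : Finsupp.equivFunOnFinite.symm (fun v => a v + s v)
      = Finsupp.equivFunOnFinite.symm a + s := by
    ext v
    simp
  rw [this]

lemma maxIdeal_eq_span {n : ℕ} (k : Type*) [Field k] :
    maxIdeal k (Fin n) = Ideal.span ((fun s => MvPolynomial.monomial s (1:k)) ''
      Set.range (fun i : Fin n => Finsupp.single i 1)) := by
  unfold maxIdeal
  congr 1
  ext p
  constructor
  · rintro ⟨i, rfl⟩
    refine ⟨Finsupp.single i 1, ⟨i, rfl⟩, ?_⟩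
    show MvPolynomial.monomial (Finsupp.single i 1) (1:k) = MvPolynomial.X i
    rw [← MvPolynomial.X_pow_eq_monomial, pow_one]
  · rintro ⟨s, ⟨i, rfl⟩, rfl⟩
    refine ⟨i, ?_⟩
    show MvPolynomial.X i = MvPolynomial.monomial (Finsupp.single i 1) (1:k)
    rw [← MvPolynomial.X_pow_eq_monomial, pow_one]

lemma sum_coords_of_singles {n : ℕ} (l : List (Fin n →₀ ℕ))
    (hl : ∀ x ∈ l, x ∈ Set.range (fun i : Fin n => Finsupp.single i (1:ℕ))) :
    ∑ v, l.sum v = l.length := by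
  induction l with
  | nil => simp
  | cons x l ih =>
    obtain ⟨i, rfl⟩ := hl x List.mem_cons_self
    have ih' := ih (fun y hy => hl y (List.mem_cons_of_mem _ hy))
    simp only [List.sum_cons, Finsupp.add_apply, Finset.sum_add_distrib, ih', List.length_cons]
    have : ∑ v : Fin n, (Finsupp.single i (1:ℕ)) v = 1 := by
      simp [Finsupp.single_apply]
    omega

lemma exists_big_coord {n t : ℕ} (l : List (Fin n →₀ ℕ))
    (hl : ∀ x ∈ l, x ∈ Set.range (fun i : Fin n => Finsupp.single i (1:ℕ)))
    (hlen : l.length = n * t + 1) : ∃ i0, t ≤ l.sum i0 := by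
  by_contra h
  push_neg at h
  have h1 : ∀ i, l.sum i + 1 ≤ t := fun i => h i
  have h2 : ∑ v, (l.sum v + 1) ≤ ∑ _v : Fin n, t := Finset.sum_le_sum (fun v _ => h1 v)
  rw [Finset.sum_add_distrib, sum_coords_of_singles l hl, hlen] at h2
  simp only [Finset.sum_const, Finset.card_univ, Fintype.card_fin, smul_eq_mul] at h2
  omega

lemma inSaturation_of {n : ℕ} (k : Type*) [Field k] (G : SimpleGraph (Fin n))
    (a : Fin n → ℕ) (t : ℕ)
    (hcond : ∀ i, t ≤ nu G (delNbr G a i) + wdeg G a i) :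
    inSaturation k ((edgeIdeal k G) ^ t) (monom k a) := by
  refine ⟨n * t + 1, ?_⟩
  rw [Submodule.mem_colon]
  intro p hp
  rw [smul_eq_mul]
  have hm : (maxIdeal k (Fin n)) ^ (n * t + 1) =
      Ideal.span ((fun s => MvPolynomial.monomial s (1:k)) ''
        {s | ∃ l : List (Fin n →₀ ℕ),
          (∀ x ∈ l, x ∈ Set.range (fun i : Fin n => Finsupp.single i 1)) ∧
          l.length = n * t + 1 ∧ l.sum = s}) := by
    rw [maxIdeal_eq_span k, ideal_span_image_pow]
  rw [hm] at hp
  induction hp using Submodule.span_induction with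
  | mem q hq =>
    obtain ⟨s, ⟨l, hl, hlen, rfl⟩, rfl⟩ := hq
    obtain ⟨i0, hi0⟩ := exists_big_coord l hl hlen
    rw [monom_mul_monomial]
    rw [monom_mem_pow_iff]
    exact exists_matching_of_star i0 (hcond i0) (fun v => l.sum v) hi0
  | zero => rw [mul_zero]; exact Ideal.zero_mem _
  | add q r _ _ hq hr => rw [mul_add]; exact Ideal.add_mem _ hq hr
  | smul r q _ hq => rw [mul_smul_comm]; exact Submodule.smul_mem _ r hq

lemma pos_edgeCount_of_mem {α : Type*} {M : Multiset (Sym2 α)} {e : Sym2 α} {v : α}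
    (he : e ∈ M) (hv : v ∈ e) : 0 < edgeCount M v :=
  Multiset.countP_pos.mpr ⟨e, he, hv⟩

lemma edgeCount_eq_zero_of {α : Type*} {M : Multiset (Sym2 α)} {v : α}
    (h : ∀ e ∈ M, v ∉ e) : edgeCount M v = 0 :=
  Multiset.countP_eq_zero.mpr h

lemma nu_delNbr_bound {n : ℕ} {G : SimpleGraph (Fin n)} {a : Fin n → ℕ} {t m : ℕ} (i : Fin n)
    (M : Multiset (Sym2 (Fin n)))
    (hM : IsWMatching G (fun v => a v + (Finsupp.single i m) v) M)
    (hcard : Multiset.card M = t) :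
    t ≤ nu G (delNbr G a i) + wdeg G a i := by
  classical
  set p : Sym2 (Fin n) → Prop := fun e => ∃ j, (G.Adj i j ∧ 0 < a j) ∧ j ∈ e with hp
  set M₁ := M.filter p with hM₁
  set M₂ := M.filter (fun e => ¬ p e) with hM₂
  have hsplit : M₁ + M₂ = M := Multiset.filter_add_not p M
  have hM₁le : M₁ ≤ M := Multiset.filter_le _ M
  have hM₂le : M₂ ≤ M := Multiset.filter_le _ M
  set F : Finset (Fin n) := Finset.univ.filter (fun j => G.Adj i j ∧ 0 < a j) with hF
  -- card M₁ ≤ wdeg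
  have hcard₁ : Multiset.card M₁ ≤ wdeg G a i := by
    have h1 : Multiset.card M₁ ≤ ∑ v ∈ F, edgeCount M₁ v := by
      refine card_le_sum_edgeCount F M₁ ?_
      intro e he
      obtain ⟨j, hj1, hj2⟩ := Multiset.of_mem_filter he
      exact ⟨j, Finset.mem_filter.mpr ⟨Finset.mem_univ j, hj1⟩, hj2⟩
    have h2 : ∑ v ∈ F, edgeCount M₁ v ≤ ∑ v ∈ F, a v := by
      refine Finset.sum_le_sum (fun v hv => ?_)
      have hvF := (Finset.mem_filter.mp hv).2
      have hvi : v ≠ i := fun hvi => G.irrefl (hvi ▸ hvF.1)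
      have := le_trans (edgeCount_le_of_le hM₁le v) (hM.2 v)
      simp only [Finsupp.single_apply] at this
      rwa [if_neg (fun h => hvi h.symm), add_zero] at this
    have h3 : ∑ v ∈ F, a v ≤ wdeg G a i := by
      have hsub : F ⊆ Finset.univ.filter (fun j => G.Adj i j) := by
        intro x hx
        rw [hF, Finset.mem_filter] at hx
        exact Finset.mem_filter.mpr ⟨Finset.mem_univ x, hx.2.1⟩
      calc ∑ v ∈ F, a v ≤ ∑ v ∈ Finset.univ.filter (fun j => G.Adj i j), a v :=
          Finset.sum_le_sum_of_subset hsub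
      _ = wdeg G a i := by rw [Finset.sum_filter]; rfl
    omega
  -- M₂ is a matching of delNbr
  have hnoi : ∀ e ∈ M₂, i ∉ e := by
    intro e he hie
    have heM : e ∈ M := Multiset.mem_of_le hM₂le he
    have heE : e ∈ G.edgeSet := hM.1 e heM
    obtain ⟨j, rfl⟩ := Sym2.mem_iff_exists.mp hie
    have hadj : G.Adj i j := G.mem_edgeSet.mp heE
    have hnp : ¬ p s(i, j) := (Multiset.mem_filter.mp he).2
    by_cases haj : 0 < a j
    · exact hnp ⟨j, ⟨hadj, haj⟩, by simp⟩
    · have hji : j ≠ i := fun h => G.irrefl (h ▸ hadj)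
      have hcnt : 0 < edgeCount M j := pos_edgeCount_of_mem heM (by simp)
      have := hM.2 j
      simp only [Finsupp.single_apply] at this
      rw [if_neg (fun h => hji h.symm), add_zero] at this
      omega
  have hM₂match : IsWMatching G (delNbr G a i) M₂ := by
    refine ⟨fun e he => hM.1 e (Multiset.mem_of_le hM₂le he), fun v => ?_⟩
    by_cases hvadj : G.Adj i v
    · rw [delNbr, if_pos hvadj]
      by_cases hav : 0 < a v
      · have : edgeCount M₂ v = 0 := by
          refine edgeCount_eq_zero_of (fun e he hve => ?_)
          exact ((Multiset.mem_filter.mp he).2) ⟨v, ⟨hvadj, hav⟩, hve⟩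
        omega
      · have hvi : v ≠ i := fun h => G.irrefl (h ▸ hvadj)
        have := le_trans (edgeCount_le_of_le hM₂le v) (hM.2 v)
        simp only [Finsupp.single_apply] at this
        rw [if_neg (fun h => hvi h.symm), add_zero] at this
        omega
    · rw [delNbr, if_neg hvadj]
      rcases eq_or_ne v i with rfl | hvi
      · have : edgeCount M₂ v = 0 := edgeCount_eq_zero_of hnoi
        omega
      · have := le_trans (edgeCount_le_of_le hM₂le v) (hM.2 v)
        simp only [Finsupp.single_apply] at this
        rwa [if_neg (fun h => hvi h.symm), add_zero] at this
  have hcard₂ : Multiset.card M₂ ≤ nu G (delNbr G a i) :=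
    le_nu_iff.mpr ⟨M₂, hM₂match, rfl⟩
  have : Multiset.card M₁ + Multiset.card M₂ = t := by
    rw [← Multiset.card_add, hsplit, hcard]
  omega

end AuxSat
theorem stmt1 {n : ℕ} (k : Type*) [Field k] (G : SimpleGraph (Fin n))
    (a : Fin n → ℕ) (t : ℕ) (ht : 1 ≤ t) :
    (inSaturation k ((edgeIdeal k G) ^ t) (monom k a) ∧
        monom k a ∉ (edgeIdeal k G) ^ t) ↔
      (nu G a < t ∧ ∀ i : Fin n, t ≤ nu G (delNbr G a i) + wdeg G a i) := by
  have hmem : monom k a ∈ (edgeIdeal k G) ^ t ↔ t ≤ nu G a := by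
    rw [monom_mem_pow_iff]
    exact le_nu_iff.symm
  constructor
  · rintro ⟨⟨m, hsat⟩, hnot⟩
    refine ⟨?_, ?_⟩
    · by_contra h
      push_neg at h
      exact hnot (hmem.mpr h)
    · intro i
      have hXm : (MvPolynomial.X i : MvPolynomial (Fin n) k) ^ m ∈ (maxIdeal k (Fin n)) ^ m :=
        Ideal.pow_mem_pow (Ideal.subset_span (Set.mem_range_self i)) m
      have hmul := Submodule.mem_colon.mp hsat _ hXm
      rw [smul_eq_mul, MvPolynomial.X_pow_eq_monomial, monom_mul_monomial] at hmul
      obtain ⟨M, hM, hc⟩ := (monom_mem_pow_iff k G _ t).mp hmul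
      exact nu_delNbr_bound i M hM hc
  · rintro ⟨h1, h2⟩
    exact ⟨inSaturation_of k G a t h2, fun hm => absurd (hmem.mp hm) (by omega)⟩
end

section
/- Let Γ be a simple graph on V = {1,…,n} with edge ideal I = I(Γ), let t ≥ 1, and let a ∈ ℕ^n. If x^a ∈ Ĩ^t \ I^t, then V_a is a dominating set of Γ, i.e. every vertex of V \ V_a is adjacent to at least one vertex of V_a. -/
open MvPolynomial
open scoped Classical

noncomputable section

def evec' {n : ℕ} (p : Fin n × Fin n) : Fin n →₀ ℕ :=
  Finsupp.single p.1 1 + Finsupp.single p.2 1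

def Bset {n : ℕ} (G : SimpleGraph (Fin n)) (t : ℕ) : Set (Fin n →₀ ℕ) :=
  {b | ∃ l : List (Fin n × Fin n), l.length = t ∧ (∀ p ∈ l, G.Adj p.1 p.2) ∧
    b = (l.map evec').sum}

theorem listprod_eq {n : ℕ} (k : Type*) [Field k] (l : List (Fin n × Fin n)) :
    (l.map fun p => (X p.1 * X p.2 : MvPolynomial (Fin n) k)).prod
      = monomial (l.map evec').sum 1 := by
  induction l with
  | nil => simp [monomial_zero']
  | cons p l ih =>
      simp only [List.map_cons, List.prod_cons, List.sum_cons, ih]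
      rw [show (X p.1 * X p.2 : MvPolynomial (Fin n) k) = monomial (evec' p) 1 by
        rw [X, X, monomial_mul, one_mul]; rfl]
      rw [monomial_mul, one_mul]

theorem listprod_mem {n : ℕ} (k : Type*) [Field k] (G : SimpleGraph (Fin n))
    (l : List (Fin n × Fin n)) (hadj : ∀ p ∈ l, G.Adj p.1 p.2) :
    (l.map fun p => (X p.1 * X p.2 : MvPolynomial (Fin n) k)).prod
      ∈ (edgeIdeal k G) ^ l.length := by
  induction l with
  | nil => simp [Ideal.one_eq_top]
  | cons p l ih =>
      simp only [List.map_cons, List.prod_cons, List.length_cons]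
      rw [pow_succ']
      exact Ideal.mul_mem_mul
        (Ideal.subset_span ⟨p.1, p.2, hadj p List.mem_cons_self, rfl⟩)
        (ih fun q hq => hadj q (List.mem_cons_of_mem p hq))

theorem pow_le_span {n : ℕ} (k : Type*) [Field k] (G : SimpleGraph (Fin n)) :
    ∀ t : ℕ, (edgeIdeal k G) ^ t ≤
      Ideal.span ((fun d => monomial d (1 : k)) '' Bset G t)
  | 0 => by
      rw [pow_zero, Ideal.one_eq_top]
      refine top_le_iff.mpr ((Ideal.eq_top_iff_one _).mpr (Ideal.subset_span ?_))
      exact ⟨0, ⟨[], rfl, by simp, by simp⟩, by simp [monomial_zero']⟩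
  | (t + 1) => by
      rw [pow_succ]
      calc (edgeIdeal k G) ^ t * edgeIdeal k G
          ≤ Ideal.span ((fun d => monomial d (1 : k)) '' Bset G t) * edgeIdeal k G :=
            Ideal.mul_mono_left (pow_le_span k G t)
        _ ≤ Ideal.span ((fun d => monomial d (1 : k)) '' Bset G (t + 1)) := by
            rw [edgeIdeal, Ideal.span_mul_span']
            apply Ideal.span_le.mpr
            rintro x hx
            rw [Set.mem_mul] at hx
            obtain ⟨y, ⟨b, ⟨l, hlen, hadj, rfl⟩, rfl⟩, z, ⟨i, j, hij, rfl⟩, rfl⟩ := hx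
            refine Ideal.subset_span ⟨(l.map evec').sum + evec' (i, j),
              ⟨l ++ [(i, j)], by simp [hlen], ?_, by simp⟩, ?_⟩
            · intro p hp
              rcases List.mem_append.mp hp with h | h
              · exact hadj p h
              · simp at h; subst h; exact hij
            · rw [show (X i * X j : MvPolynomial (Fin n) k) = monomial (evec' (i, j)) 1 by
                rw [X, X, monomial_mul, one_mul]; rfl]
              rw [monomial_mul, one_mul]

theorem monom_eq {n : ℕ} (a : Fin n → ℕ) (k : Type*) [Field k] :
    monom k a = monomial (Finsupp.equivFunOnFinite.symm a) 1 := by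
  rw [monom, ← prod_X_pow_eq_monomial]
  refine (Finset.prod_subset (Finset.subset_univ _) ?_).symm
  intro i _ hi
  simp only [Finsupp.mem_support_iff, ne_eq, not_not] at hi
  rw [show a i = 0 from hi, pow_zero]

end

theorem stmt2 {n : ℕ} (k : Type*) [Field k] (G : SimpleGraph (Fin n))
    (a : Fin n → ℕ) (t : ℕ) (ht : 1 ≤ t)
    (h : inSaturation k ((edgeIdeal k G) ^ t) (monom k a) ∧
      monom k a ∉ (edgeIdeal k G) ^ t) :
    IsDominating G {i | 0 < a i} := by
  classical
  obtain ⟨⟨m, hm⟩, hnot⟩ := h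
  intro v hv
  by_contra hno
  push_neg at hno
  have hXv : (X v : MvPolynomial (Fin n) k) ^ m ∈ (maxIdeal k (Fin n)) ^ m :=
    Ideal.pow_mem_pow (Ideal.subset_span (Set.mem_range_self v)) m
  have hmem : monom k a * (X v : MvPolynomial (Fin n) k) ^ m ∈ (edgeIdeal k G) ^ t := by
    have := Submodule.mem_colon.mp hm _ hXv
    simpa [smul_eq_mul] using this
  set abar := Finsupp.equivFunOnFinite.symm a with habar
  have habar_apply : ∀ i, abar i = a i := fun i => rfl
  have key : monom k a * (X v : MvPolynomial (Fin n) k) ^ m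
      = monomial (abar + Finsupp.single v m) 1 := by
    rw [monom_eq, X_pow_eq_monomial, monomial_mul, one_mul]
  rw [key] at hmem
  have hspan := pow_le_span k G t hmem
  rw [mem_ideal_span_monomial_image] at hspan
  have hsupp : (abar + Finsupp.single v m) ∈
      (monomial (abar + Finsupp.single v m) (1 : k)).support := by
    rw [support_monomial]
    simp
  obtain ⟨b, ⟨l, hlen, hadj, rfl⟩, hle⟩ := hspan _ hsupp
  have hle' : ∀ i, ((l.map evec').sum) i ≤ abar i + (Finsupp.single v m) i :=
    fun i => Finsupp.le_def.mp hle i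
  -- at coordinates ≠ v, the sum is bounded by a
  have hbound : ∀ u, u ≠ v → ((l.map evec').sum) u ≤ a u := by
    intro u hu
    have := hle' u
    rwa [habar_apply, Finsupp.single_apply, if_neg (fun hh => hu hh.symm),
      add_zero] at this
  -- each entry of l is ≤ the sum
  have hentry : ∀ p ∈ l, evec' p ≤ (l.map evec').sum := by
    intro p hp
    exact List.single_le_sum (fun x _ => Finsupp.le_def.mpr fun i => Nat.zero_le _) _
      (List.mem_map_of_mem hp)
  -- no edge of l touches v
  have hnov : ∀ p ∈ l, p.1 ≠ v ∧ p.2 ≠ v := by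
    intro p hp
    have keybranch : ∀ u : Fin n, u ≠ v → 0 < evec' p u → G.Adj u v → False := by
      intro u hu hpos hadj'
      have h1 : 0 < ((l.map evec').sum) u :=
        lt_of_lt_of_le hpos (Finsupp.le_def.mp (hentry p hp) u)
      have h2 : 0 < a u := lt_of_lt_of_le h1 (hbound u hu)
      exact hno u h2 hadj'
    constructor
    · intro hh
      have hne : p.2 ≠ v := by rw [← hh]; exact (hadj p hp).ne'
      refine keybranch p.2 hne ?_ ?_
      · simp [evec', Finsupp.single_apply]
      · rw [← hh]; exact (hadj p hp).symm
    · intro hh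
      have hne : p.1 ≠ v := by rw [← hh]; exact (hadj p hp).ne
      refine keybranch p.1 hne ?_ ?_
      · simp [evec', Finsupp.single_apply]
      · rw [← hh]; exact hadj p hp
  -- hence the sum vanishes at v
  have hsumv : ((l.map evec').sum) v = 0 := by
    rw [← Finsupp.applyAddHom_apply, map_list_sum]
    refine List.sum_eq_zero fun x hx => ?_
    rw [List.mem_map] at hx
    obtain ⟨d, hd, rfl⟩ := hx
    rw [List.mem_map] at hd
    obtain ⟨p, hp, rfl⟩ := hd
    obtain ⟨h1, h2⟩ := hnov p hp
    simp [evec', Finsupp.single_apply, if_neg h1, if_neg h2]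
  -- so the sum is ≤ abar
  have hba : (l.map evec').sum ≤ abar := by
    refine Finsupp.le_def.mpr fun i => ?_
    by_cases hiv : i = v
    · subst hiv; rw [hsumv]; exact Nat.zero_le _
    · rw [habar_apply]; exact hbound i hiv
  -- conclude monom k a ∈ I^t, contradiction
  apply hnot
  have hfac : monom k a
      = monomial (abar - (l.map evec').sum) 1 * monomial ((l.map evec').sum) 1 := by
    rw [monomial_mul, one_mul, tsub_add_cancel_of_le hba, monom_eq]
  rw [hfac, ← listprod_eq]
  exact Ideal.mul_mem_left _ _ (hlen ▸ listprod_mem k G l hadj)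
end

section
/- Let Γ be a simple graph on V = {1,…,n} with edge ideal I, and let F be a cover of Γ. Then P_F is an associated prime of I^2 if and only if F is a minimal cover of Γ, or F is minimal among the covers of Γ containing the closed neighborhood N[W] of the vertex set W of a triangle of Γ. -/
open MvPolynomial
open scoped Classical

namespace S15

open MvPolynomial

variable {n : ℕ}

/-! ### Indicator arithmetic -/

def ind (x v : Fin n) : ℕ := if x = v then 1 else 0

lemma ind_self (x : Fin n) : ind x x = 1 := if_pos rfl

lemma ind_ne {x v : Fin n} (h : x ≠ v) : ind x v = 0 := if_neg h

lemma ind_le (x v : Fin n) : ind x v ≤ 1 := by unfold ind; split <;> omega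

lemma ind_cases (x v : Fin n) : (x = v ∧ ind x v = 1) ∨ (x ≠ v ∧ ind x v = 0) := by
  by_cases h : x = v
  · exact Or.inl ⟨h, by rw [h, ind_self]⟩
  · exact Or.inr ⟨h, ind_ne h⟩

lemma ind_eq_one {x v : Fin n} (h : 1 ≤ ind x v) : x = v := by
  rcases ind_cases x v with ⟨h1, _⟩ | ⟨_, h2⟩
  · exact h1
  · omega

/-! ### Combinatorial conditions -/

def C1 (G : SimpleGraph (Fin n)) (F : Set (Fin n)) (b : Fin n → ℕ) : Prop :=
  ∀ i ∈ F, ∃ p q r s, G.Adj p q ∧ G.Adj r s ∧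
    ∀ v ∈ F, ind p v + ind q v + ind r v + ind s v ≤ b v + ind i v

def C2 (G : SimpleGraph (Fin n)) (F : Set (Fin n)) (b : Fin n → ℕ) : Prop :=
  ∀ p q r s, G.Adj p q → G.Adj r s → ∃ v ∈ F, b v < ind p v + ind q v + ind r v + ind s v

/-- The graph-theoretic right-hand side. -/
def TriOK (G : SimpleGraph (Fin n)) (F : Set (Fin n)) : Prop :=
  graphCore G F = ∅ ∨ ∃ u v w : Fin n, G.Adj u v ∧ G.Adj v w ∧ G.Adj u w ∧
    closedNbhd G {u, v, w} ⊆ F ∧ graphCore G F ⊆ closedNbhd G {u, v, w}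

/-! ### The combinatorial heart -/

/-! ### Graph-side translation -/

lemma diff_cover {G : SimpleGraph (Fin n)} {F : Set (Fin n)} (hF : IsVCover G F)
    {x : Fin n} (hx : x ∈ graphCore G F) : IsVCover G (F \ {x}) := by
  intro a b hab
  rcases hF hab with ha | hb
  · by_cases hax : a = x
    · subst hax
      refine Or.inr ⟨hx.2 b hab, ?_⟩
      simp only [Set.mem_singleton_iff]
      exact (G.ne_of_adj hab).symm
    · exact Or.inl ⟨ha, hax⟩
  · by_cases hbx : b = x
    · subst hbx
      refine Or.inl ⟨hx.2 a hab.symm, ?_⟩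
      simp only [Set.mem_singleton_iff]
      exact G.ne_of_adj hab
    · exact Or.inr ⟨hb, hbx⟩

lemma mem_core_of_not_mem {G : SimpleGraph (Fin n)} {F F' : Set (Fin n)}
    (hcov : IsVCover G F') (hsub : F' ⊆ F) {i : Fin n} (hi : i ∈ F) (hi' : i ∉ F') :
    i ∈ graphCore G F := by
  refine ⟨hi, fun j hj => ?_⟩
  rcases hcov hj with h | h
  · exact absurd h hi'
  · exact hsub h

lemma core_empty_iff {G : SimpleGraph (Fin n)} {F : Set (Fin n)} (hF : IsVCover G F) :
    graphCore G F = ∅ ↔ IsMinimalVCover G F := by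
  constructor
  · intro hc
    refine ⟨hF, fun F' hcov hsub => ?_⟩
    refine Set.Subset.antisymm hsub fun i hi => ?_
    by_contra hi'
    have := mem_core_of_not_mem hcov hsub hi hi'
    rw [hc] at this
    exact this
  · rintro ⟨-, hmin⟩
    rw [Set.eq_empty_iff_forall_notMem]
    intro x hx
    have := hmin (F \ {x}) (diff_cover hF hx) Set.diff_subset
    have hxx : x ∈ F \ {x} := this.symm ▸ hx.1
    exact hxx.2 rfl

lemma minCoverOver_iff {G : SimpleGraph (Fin n)} {F S : Set (Fin n)} (hF : IsVCover G F) :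
    MinimalCoverOver G S F ↔ (S ⊆ F ∧ graphCore G F ⊆ S) := by
  constructor
  · rintro ⟨-, hSF, hmin⟩
    refine ⟨hSF, fun x hx => ?_⟩
    by_contra hxS
    have hsub : S ⊆ F \ {x} := fun y hy =>
      ⟨hSF hy, by simp only [Set.mem_singleton_iff]; exact fun h => hxS (h ▸ hy)⟩
    have := hmin (F \ {x}) (diff_cover hF hx) hsub Set.diff_subset
    have hxx : x ∈ F \ {x} := this.symm ▸ hx.1
    exact hxx.2 rfl
  · rintro ⟨hSF, hcore⟩
    refine ⟨hF, hSF, fun F' hcov hSF' hsub => ?_⟩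
    refine Set.Subset.antisymm hsub fun i hi => ?_
    by_contra hi'
    exact hi' (hSF' (hcore (mem_core_of_not_mem hcov hsub hi hi')))

theorem triOK_iff {G : SimpleGraph (Fin n)} {F : Set (Fin n)} (hF : IsVCover G F) :
    TriOK G F ↔
      (IsMinimalVCover G F ∨
        ∃ u v w : Fin n, G.Adj u v ∧ G.Adj v w ∧ G.Adj u w ∧
          MinimalCoverOver G (closedNbhd G {u, v, w}) F) := by
  unfold TriOK
  rw [core_empty_iff hF]
  apply or_congr_right
  apply exists_congr; intro u
  apply exists_congr; intro v
  apply exists_congr; intro w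
  apply and_congr_right; intro h1
  apply and_congr_right; intro h2
  apply and_congr_right; intro h3
  rw [minCoverOver_iff hF]

/-! ### Algebra side -/

def eSet (G : SimpleGraph (Fin n)) : Set (Fin n →₀ ℕ) :=
  {s | ∃ i j, G.Adj i j ∧ s = Finsupp.single i 1 + Finsupp.single j 1}

variable (k : Type*) [Field k]

lemma hX (i : Fin n) : (X i : MvPolynomial (Fin n) k) = monomial (Finsupp.single i 1) 1 := by
  rw [← pow_one (X i), X_pow_eq_monomial]

theorem edgeIdeal_eq (G : SimpleGraph (Fin n)) :
    edgeIdeal k G = Ideal.span ((fun s => monomial s (1 : k)) '' eSet G) := by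
  unfold edgeIdeal
  congr 1
  ext p
  constructor
  · rintro ⟨i, j, hij, rfl⟩
    exact ⟨_, ⟨i, j, hij, rfl⟩, by rw [hX, hX, monomial_mul, one_mul]⟩
  · rintro ⟨m, ⟨i, j, hij, rfl⟩, rfl⟩
    exact ⟨i, j, hij, by rw [hX, hX, monomial_mul, one_mul]⟩

theorem mem_sq {G : SimpleGraph (Fin n)} (p : MvPolynomial (Fin n) k) :
    p ∈ (edgeIdeal k G) ^ 2 ↔
      ∀ m ∈ p.support, ∃ s ∈ eSet G, ∃ t ∈ eSet G, s + t ≤ m := by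
  have h2 : (edgeIdeal k G) ^ 2 =
      Ideal.span ((fun s => monomial s (1 : k)) ''
        {m | ∃ s ∈ eSet G, ∃ t ∈ eSet G, m = s + t}) := by
    rw [edgeIdeal_eq, pow_two, Ideal.span_mul_span']
    congr 1
    ext q
    constructor
    · rw [Set.mem_mul]
      rintro ⟨-, ⟨s, hs, rfl⟩, -, ⟨t, ht, rfl⟩, rfl⟩
      exact ⟨s + t, ⟨s, hs, t, ht, rfl⟩, by rw [monomial_mul, one_mul]⟩
    · rintro ⟨m, ⟨s, hs, t, ht, rfl⟩, rfl⟩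
      rw [Set.mem_mul]
      exact ⟨_, ⟨s, hs, rfl⟩, _, ⟨t, ht, rfl⟩, by rw [monomial_mul, one_mul]⟩
  rw [h2, mem_ideal_span_monomial_image]
  constructor
  · intro h m hm
    obtain ⟨si, ⟨s, hs, t, ht, rfl⟩, hle⟩ := h m hm
    exact ⟨s, hs, t, ht, hle⟩
  · intro h m hm
    obtain ⟨s, hs, t, ht, hle⟩ := h m hm
    exact ⟨s + t, ⟨s, hs, t, ht, rfl⟩, hle⟩

theorem mem_varIdeal {F : Set (Fin n)} (p : MvPolynomial (Fin n) k) :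
    p ∈ varIdeal k F ↔ ∀ m ∈ p.support, ∃ i ∈ F, (m : Fin n →₀ ℕ) i ≠ 0 := by
  have : varIdeal k F = Ideal.span (X '' F : Set (MvPolynomial (Fin n) k)) := rfl
  rw [this, mem_ideal_span_X_image]

theorem varIdeal_prime (F : Set (Fin n)) : (varIdeal k F).IsPrime := by
  classical
  set g : Fin n → MvPolynomial (Fin n) k := fun i => if i ∈ F then 0 else X i with hg
  have hmono : ∀ (d : Fin n →₀ ℕ) (c : k),
      (aeval g) (monomial d c) = if (∀ i ∈ F, d i = 0) then monomial d c else 0 := by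
    intro d c
    rw [aeval_monomial]
    split_ifs with hd
    · have : (d.prod fun i e => g i ^ e) = d.prod fun i e => (X i : MvPolynomial (Fin n) k) ^ e := by
        apply Finsupp.prod_congr
        intro i hi
        have hiF : i ∉ F := fun hiF => (Finsupp.mem_support_iff.mp hi) (hd i hiF)
        rw [hg]; simp [hiF]
      rw [this, algebraMap_eq, ← monomial_eq]
    · push_neg at hd
      obtain ⟨i, hiF, hdi⟩ := hd
      have : (d.prod fun i e => g i ^ e) = 0 := by
        apply Finset.prod_eq_zero (Finsupp.mem_support_iff.mpr hdi)
        rw [hg]; simp [hiF, zero_pow hdi]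
      rw [this, mul_zero]
  have hker : varIdeal k F = RingHom.ker (aeval g : MvPolynomial (Fin n) k →ₐ[k] _).toRingHom := by
    apply le_antisymm
    · unfold varIdeal
      rw [Ideal.span_le]
      rintro q ⟨i, hi, rfl⟩
      rw [SetLike.mem_coe, RingHom.mem_ker]
      show (aeval g) (X i) = 0
      rw [aeval_X, hg]
      simp [hi]
    · intro q hq
      rw [RingHom.mem_ker] at hq
      have hq' : (aeval g) q = 0 := hq
      rw [mem_varIdeal]
      by_contra hc
      push_neg at hc
      obtain ⟨m, hm, hmF⟩ := hc
      have hco : coeff m ((aeval g) q) = coeff m q := by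
        conv_lhs => rw [q.as_sum, map_sum]
        rw [coeff_sum]
        have : ∀ m' ∈ q.support,
            coeff m ((aeval g) (monomial m' (coeff m' q))) =
              if m' = m then coeff m' q else 0 := by
          intro m' _
          rw [hmono]
          by_cases h1 : ∀ i ∈ F, m' i = 0
          · rw [if_pos h1, coeff_monomial]
          · rw [if_neg h1, coeff_zero]
            have hne : m' ≠ m := fun h => h1 fun i hi => by rw [h]; exact hmF i hi
            rw [if_neg hne]
        rw [Finset.sum_congr rfl this, Finset.sum_ite_eq' q.support m (fun m' => coeff m' q),
          if_pos hm]
      rw [hq'] at hco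
      simp only [coeff_zero] at hco
      exact (MvPolynomial.mem_support_iff.mp hm) hco.symm
  rw [hker]
  exact RingHom.ker_isPrime _

theorem assocPrime_iff {R : Type*} [CommRing R] [IsNoetherianRing R] (J P : Ideal R) :
    assocPrime J P ↔ P.IsPrime ∧ ∃ f : R, ∀ r, r ∈ P ↔ r * f ∈ J := by
  have key : ∀ f r : R, (r ∈ (⊥ : Submodule R (R ⧸ J)).colon {(Ideal.Quotient.mk J f : R ⧸ J)})
      ↔ r * f ∈ J := by
    intro f r
    rw [Submodule.mem_colon_singleton, Submodule.mem_bot, Algebra.smul_def,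
      Ideal.Quotient.algebraMap_eq, ← map_mul, Ideal.Quotient.eq_zero_iff_mem]
  unfold assocPrime associatedPrimes
  rw [Set.mem_setOf_eq, isAssociatedPrime_iff]
  constructor
  · rintro ⟨hP, x, hx⟩
    obtain ⟨f, rfl⟩ := Ideal.Quotient.mk_surjective x
    exact ⟨hP, f, fun r => by rw [hx]; exact key f r⟩
  · rintro ⟨hP, f, hf⟩
    refine ⟨hP, Ideal.Quotient.mk J f, ?_⟩
    refine SetLike.ext fun r => ?_
    rw [key f r]; exact hf r

/-- Monomial conditions. -/
def Cond1 (G : SimpleGraph (Fin n)) (F : Set (Fin n)) (a : Fin n →₀ ℕ) : Prop :=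
  ∀ i ∈ F, ∃ s ∈ eSet G, ∃ t ∈ eSet G, s + t ≤ a + Finsupp.single i 1

def Cond2 (G : SimpleGraph (Fin n)) (F : Set (Fin n)) (a : Fin n →₀ ℕ) : Prop :=
  ∀ s ∈ eSet G, ∀ t ∈ eSet G, ∃ v ∈ F, a v < s v + t v

theorem witness_iff {G : SimpleGraph (Fin n)} {F : Set (Fin n)} :
    (∃ f : MvPolynomial (Fin n) k, ∀ r, r ∈ varIdeal k F ↔ r * f ∈ (edgeIdeal k G) ^ 2) ↔
      ∃ a : Fin n →₀ ℕ, Cond1 G F a ∧ Cond2 G F a := by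
  classical
  constructor
  · rintro ⟨f, hf⟩
    have hc1 : ∀ m ∈ f.support, Cond1 G F m := by
      intro m hm i hi
      have hXi : (X i : MvPolynomial (Fin n) k) ∈ varIdeal k F :=
        Ideal.subset_span ⟨i, hi, rfl⟩
      have hXf := (hf (X i)).1 hXi
      rw [mem_sq] at hXf
      have hmem : m + Finsupp.single i 1 ∈ (X i * f).support := by
        rw [mul_comm, MvPolynomial.mem_support_iff]
        show coeff _ _ ≠ 0
        rw [hX, coeff_mul_monomial, mul_one]
        exact MvPolynomial.mem_support_iff.mp hm
      obtain ⟨s, hs, t, ht, hst⟩ := hXf _ hmem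
      exact ⟨s, hs, t, ht, hst⟩
    have hc2 : ∃ m ∈ f.support, Cond2 G F m := by
      by_contra hc
      push_neg at hc
      unfold Cond2 at hc
      push_neg at hc
      choose s hs t ht hb using hc
      set u : Fin n →₀ ℕ := Finsupp.equivFunOnFinite.symm (fun v =>
        if v ∈ F then 0 else ∑ m ∈ f.support.attach, (s m.1 m.2 v + t m.1 m.2 v)) with hu
      have hucoe : ∀ v, u v = if v ∈ F then 0 else
          ∑ m ∈ f.support.attach, (s m.1 m.2 v + t m.1 m.2 v) := by
        intro v; rw [hu]; rfl
      have hprod : monomial u (1 : k) * f ∈ (edgeIdeal k G) ^ 2 := by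
        rw [mem_sq]
        intro m' hm'
        have := support_mul (monomial u (1 : k)) f hm'
        rw [Finset.mem_add] at this
        obtain ⟨x, hx, m, hm, rfl⟩ := this
        rw [support_monomial, if_neg (one_ne_zero : (1:k) ≠ 0), Finset.mem_singleton] at hx
        subst hx
        refine ⟨s m hm, hs m hm, t m hm, ht m hm, ?_⟩
        rw [Finsupp.le_def]
        intro v
        rw [Finsupp.add_apply, Finsupp.add_apply]
        by_cases hvF : v ∈ F
        · have := hb m hm v hvF
          have hu0 : u v = 0 := by rw [hucoe, if_pos hvF]
          omega
        · have hle : s m hm v + t m hm v ≤ u v := by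
            rw [hucoe, if_neg hvF]
            exact Finset.single_le_sum
              (f := fun (x : {x // x ∈ f.support}) => s x.1 x.2 v + t x.1 x.2 v)
              (fun _ _ => Nat.zero_le _) (Finset.mem_attach _ ⟨m, hm⟩)
          omega
      have humem : monomial u (1 : k) ∈ varIdeal k F := (hf _).2 hprod
      rw [mem_varIdeal] at humem
      obtain ⟨i, hiF, hne⟩ := humem u (by
        rw [support_monomial, if_neg (one_ne_zero : (1:k) ≠ 0)]
        exact Finset.mem_singleton_self u)
      exact hne (by rw [hucoe, if_pos hiF])
    obtain ⟨m, hm, h2⟩ := hc2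
    exact ⟨m, hc1 m hm, h2⟩
  · rintro ⟨a, h1, h2⟩
    refine ⟨monomial a 1, fun r => ⟨?_, ?_⟩⟩
    · intro hr
      have hcolon : varIdeal k F ≤
          Submodule.colon ((edgeIdeal k G) ^ 2)
            ({(monomial a (1 : k) : MvPolynomial (Fin n) k)} : Set (MvPolynomial (Fin n) k)) := by
        unfold varIdeal
        rw [Ideal.span_le]
        rintro q ⟨i, hi, rfl⟩
        rw [SetLike.mem_coe, Submodule.mem_colon_singleton, smul_eq_mul]
        show X i * monomial a (1:k) ∈ _
        rw [hX, monomial_mul, one_mul, mem_sq]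
        intro m hm
        rw [support_monomial, if_neg (one_ne_zero : (1:k) ≠ 0), Finset.mem_singleton] at hm
        subst hm
        obtain ⟨s, hs, t, ht, hle⟩ := h1 i hi
        refine ⟨s, hs, t, ht, ?_⟩
        rw [Finsupp.le_def] at hle ⊢
        intro v
        have := hle v
        simp only [Finsupp.add_apply] at this ⊢
        omega
      have := hcolon hr
      rwa [Submodule.mem_colon_singleton, smul_eq_mul] at this
    · intro hr
      rw [mem_sq] at hr
      rw [mem_varIdeal]
      intro m hm
      have hmm : m + a ∈ (r * monomial a (1:k)).support := by
        rw [MvPolynomial.mem_support_iff]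
        rw [coeff_mul_monomial, mul_one]
        exact MvPolynomial.mem_support_iff.mp hm
      obtain ⟨s, hs, t, ht, hle⟩ := hr _ hmm
      obtain ⟨v, hv, hlt⟩ := h2 s hs t ht
      refine ⟨v, hv, ?_⟩
      have hv2 := Finsupp.le_def.mp hle v
      rw [Finsupp.add_apply, Finsupp.add_apply] at hv2
      omega

lemma ind_pair {p q : Fin n} (h : p ≠ q) (v : Fin n) : ind p v + ind q v ≤ 1 := by
  rcases ind_cases p v with ⟨hpv, e1⟩ | ⟨_, e1⟩
  · rcases ind_cases q v with ⟨hqv, e2⟩ | ⟨_, e2⟩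
    · exact absurd (hpv.trans hqv.symm) h
    · omega
  · have := ind_le q v; omega

theorem cond_iff_comb {G : SimpleGraph (Fin n)} {F : Set (Fin n)} :
    (∃ a : Fin n →₀ ℕ, Cond1 G F a ∧ Cond2 G F a) ↔
      ∃ b : Fin n → ℕ, C1 G F b ∧ C2 G F b := by
  classical
  constructor
  · rintro ⟨a, h1, h2⟩
    refine ⟨fun v => a v, ?_, ?_⟩
    · intro i hi
      obtain ⟨s, ⟨p, q, hpq, rfl⟩, t, ⟨r', s', hrs, rfl⟩, hle⟩ := h1 i hi
      refine ⟨p, q, r', s', hpq, hrs, fun v _ => ?_⟩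
      have h := Finsupp.le_def.mp hle v
      simp only [Finsupp.add_apply, Finsupp.single_apply] at h
      simp only [ind]
      split_ifs at h ⊢ <;> omega
    · intro p q r' s' hpq hrs
      obtain ⟨v, hv, hlt⟩ := h2 _ ⟨p, q, hpq, rfl⟩ _ ⟨r', s', hrs, rfl⟩
      refine ⟨v, hv, ?_⟩
      simp only [Finsupp.add_apply, Finsupp.single_apply] at hlt
      simp only [ind]
      split_ifs at hlt ⊢ <;> omega
  · rintro ⟨b, h1, h2⟩
    refine ⟨Finsupp.equivFunOnFinite.symm (fun v => if v ∈ F then b v else 2), ?_, ?_⟩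
    · intro i hi
      obtain ⟨p, q, r', s', hpq, hrs, hle⟩ := h1 i hi
      refine ⟨_, ⟨p, q, hpq, rfl⟩, _, ⟨r', s', hrs, rfl⟩, ?_⟩
      rw [Finsupp.le_def]
      intro v
      have hcoe : (Finsupp.equivFunOnFinite.symm (fun v => if v ∈ F then b v else 2) : Fin n →₀ ℕ) v
          = if v ∈ F then b v else 2 := rfl
      simp only [Finsupp.add_apply, Finsupp.single_apply, hcoe]
      by_cases hvF : v ∈ F
      · have h := hle v hvF
        simp only [ind] at h
        rw [if_pos hvF]
        split_ifs at h ⊢ <;> omega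
      · rw [if_neg hvF]
        have e1 := ind_pair hpq.ne v
        have e2 := ind_pair hrs.ne v
        simp only [ind] at e1 e2
        split_ifs at e1 e2 ⊢ <;> omega
    · rintro s ⟨p, q, hpq, rfl⟩ t ⟨r', s', hrs, rfl⟩
      obtain ⟨v, hv, hlt⟩ := h2 p q r' s' hpq hrs
      refine ⟨v, hv, ?_⟩
      have hcoe : (Finsupp.equivFunOnFinite.symm (fun v => if v ∈ F then b v else 2) : Fin n →₀ ℕ) v
          = if v ∈ F then b v else 2 := rfl
      simp only [Finsupp.add_apply, Finsupp.single_apply, hcoe, if_pos hv]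
      simp only [ind] at hlt
      split_ifs at hlt ⊢ <;> omega

end S15
namespace S15

variable {n : ℕ} {G : SimpleGraph (Fin n)} {F : Set (Fin n)} {b : Fin n → ℕ}

lemma wit (hC1 : C1 G F b) (hC2 : C2 G F b) {i : Fin n} (hi : i ∈ F) :
    ∃ p q r s, G.Adj p q ∧ G.Adj r s ∧
      (∀ v ∈ F, ind p v + ind q v + ind r v + ind s v ≤ b v + ind i v) ∧
      b i + 1 = ind p i + ind q i + ind r i + ind s i := by
  obtain ⟨p, q, r, s, hpq, hrs, hb⟩ := hC1 i hi
  obtain ⟨v₀, hv₀, hlt⟩ := hC2 p q r s hpq hrs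
  have h1 := hb v₀ hv₀
  have hvi : v₀ = i := by
    rcases ind_cases i v₀ with ⟨h, e⟩ | ⟨h, e⟩
    · exact h.symm
    · omega
  subst hvi
  have e := ind_self v₀
  exact ⟨p, q, r, s, hpq, hrs, hb, by omega⟩

lemma bF_le_one (hC1 : C1 G F b) (hC2 : C2 G F b) {i : Fin n} (hi : i ∈ F) : b i ≤ 1 := by
  obtain ⟨p, q, r, s, hpq, hrs, -, heq⟩ := wit hC1 hC2 hi
  have e1 := ind_pair hpq.ne i
  have e2 := ind_pair hrs.ne i
  omega

lemma pair_norm {p q i : Fin n} (h : G.Adj p q) (h1 : ind p i + ind q i = 1) :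
    ∃ x, G.Adj i x ∧ ∀ v, ind p v + ind q v = ind i v + ind x v := by
  rcases ind_cases p i with ⟨hpi, e⟩ | ⟨hpi, e⟩
  · subst hpi
    exact ⟨q, h, fun v => rfl⟩
  · have hqi : q = i := ind_eq_one (by omega)
    subst hqi
    exact ⟨p, h.symm, fun v => by omega⟩

/-- For `i ∈ F` with `b i = 1`, a normalized witness: both edges contain `i`. -/
lemma wit_one (hC1 : C1 G F b) (hC2 : C2 G F b) {i : Fin n} (hi : i ∈ F) (hbi : b i = 1) :
    ∃ x y, G.Adj i x ∧ G.Adj i y ∧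
      (∀ v ∈ F, ind i v + ind x v + ind i v + ind y v ≤ b v + ind i v) := by
  obtain ⟨p, q, r, s, hpq, hrs, hb, heq⟩ := wit hC1 hC2 hi
  have e1 := ind_pair hpq.ne i
  have e2 := ind_pair hrs.ne i
  obtain ⟨x, hx, hxe⟩ := pair_norm hpq (by omega : ind p i + ind q i = 1)
  obtain ⟨y, hy, hye⟩ := pair_norm hrs (by omega : ind r i + ind s i = 1)
  refine ⟨x, y, hx, hy, fun v hv => ?_⟩
  have h0 := hb v hv
  have h1 := hxe v
  have h2 := hye v
  omega

lemma nbr_b_pos {j c d : Fin n} (hjc : G.Adj j c)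
    (HB : ∀ v ∈ F, ind j v + ind c v + ind j v + ind d v ≤ b v + ind j v)
    (hcF : c ∈ F) : 1 ≤ b c := by
  have h := HB c hcF
  have e1 := ind_self c
  have e2 := ind_ne hjc.ne'
  omega

lemma target1 (hC2 : C2 G F b) {i y x c : Fin n}
    (hiy : G.Adj i y) (hxc : G.Adj x c)
    (hiF : i ∈ F) (hyF : y ∈ F) (hxF : x ∈ F)
    (hbi : b i = 1) (hby : b y = 1) (hbx : b x = 1)
    (hxi : x ≠ i) (hxy : x ≠ y)
    (hcb : c ∈ F → 1 ≤ b c) : c = i ∨ c = y := by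
  by_contra hcc
  push_neg at hcc
  obtain ⟨hci, hcy⟩ := hcc
  obtain ⟨v₁, hv₁, hlt⟩ := hC2 i y x c hiy hxc
  rcases eq_or_ne v₁ i with h | hne1
  · subst h
    have e1 := ind_self v₁
    have e2 := ind_ne hiy.ne'
    have e3 := ind_ne hxi
    have e4 := ind_ne hci
    omega
  rcases eq_or_ne v₁ y with h | hne2
  · subst h
    have e1 := ind_ne hiy.ne
    have e2 := ind_self v₁
    have e3 := ind_ne hxy
    have e4 := ind_ne hcy
    omega
  rcases eq_or_ne v₁ x with h | hne3
  · subst h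
    have e1 := ind_ne (Ne.symm hxi)
    have e2 := ind_ne (Ne.symm hxy)
    have e3 := ind_self v₁
    have e4 := ind_ne hxc.ne'
    omega
  rcases eq_or_ne v₁ c with h | hne4
  · subst h
    have hb1 := hcb hv₁
    have e1 := ind_ne (Ne.symm hci)
    have e2 := ind_ne (Ne.symm hcy)
    have e3 := ind_ne hxc.ne
    have e4 := ind_self v₁
    omega
  · have e1 := ind_ne (Ne.symm hne1)
    have e2 := ind_ne (Ne.symm hne2)
    have e3 := ind_ne (Ne.symm hne3)
    have e4 := ind_ne (Ne.symm hne4)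
    omega

/-- Case `b i = 1` for `i` in the core: produces a triangle through `i`. -/
lemma core_one (hC1 : C1 G F b) (hC2 : C2 G F b) {i : Fin n}
    (hi : i ∈ graphCore G F) (hbi : b i = 1) :
    ∃ x y, G.Adj i x ∧ G.Adj i y ∧ G.Adj x y ∧
      x ∈ F ∧ y ∈ F ∧ b x = 1 ∧ b y = 1 := by
  obtain ⟨x, y, hix, hiy, HB⟩ := wit_one hC1 hC2 hi.1 hbi
  have hxF : x ∈ F := hi.2 x hix
  have hyF : y ∈ F := hi.2 y hiy
  have hbx1 : b x ≤ 1 := bF_le_one hC1 hC2 hxF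
  have hby1 : b y ≤ 1 := bF_le_one hC1 hC2 hyF
  have hxx := HB x hxF
  have exx := ind_self x
  have eix : ind i x = 0 := ind_ne hix.ne
  have hbx : b x = 1 := by omega
  have eyx : ind y x = 0 := by omega
  have hyx : y ≠ x := by
    intro h; subst h; rw [ind_self] at eyx; omega
  have hyy := HB y hyF
  have eyy := ind_self y
  have eiy : ind i y = 0 := ind_ne hiy.ne
  have exy : ind x y = 0 := ind_ne (Ne.symm hyx)
  have hby : b y = 1 := by omega
  -- witness at x
  obtain ⟨c, d, hxc, hxd, HB'⟩ := wit_one hC1 hC2 hxF hbx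
  have HB'' : ∀ v ∈ F, ind x v + ind d v + ind x v + ind c v ≤ b v + ind x v := by
    intro v hv; have := HB' v hv; omega
  have hc : c = i ∨ c = y :=
    target1 hC2 hiy hxc hi.1 hyF hxF hbi hby hbx hix.ne' (Ne.symm hyx)
      (nbr_b_pos hxc HB')
  have hd : d = i ∨ d = y :=
    target1 hC2 hiy hxd hi.1 hyF hxF hbi hby hbx hix.ne' (Ne.symm hyx)
      (nbr_b_pos hxd HB'')
  have hcd : c ≠ d := by
    intro h
    subst h
    have hcF : c ∈ F := by rcases hc with rfl | rfl <;> [exact hi.1; exact hyF]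
    have hbc : b c = 1 := by rcases hc with rfl | rfl <;> [exact hbi; exact hby]
    have h1 := HB' c hcF
    have e1 := ind_self c
    have e2 : ind x c = 0 := ind_ne hxc.ne
    omega
  rcases hc with rfl | rfl
  · rcases hd with rfl | rfl
    · exact absurd rfl hcd
    · exact ⟨x, d, hix, hiy, hxd, hxF, hyF, hbx, hby⟩
  · rcases hd with rfl | rfl
    · exact ⟨x, c, hix, hiy, hxc, hxF, hyF, hbx, hby⟩
    · exact absurd rfl hcd

lemma target2 (hC2 : C2 G F b) {j c r s : Fin n}
    (hrs : G.Adj r s) (hjc : G.Adj j c)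
    (hjF : j ∈ F) (hrF : r ∈ F)
    (hbj : b j = 1) (hbr : b r = 1)
    (hjr : j ≠ r) (hjs : j ≠ s)
    (hbs : s ∈ F → b s = 1)
    (hcb : c ∈ F → 1 ≤ b c) :
    c = r ∨ (c = s ∧ s ∈ F) := by
  by_contra hcc
  push_neg at hcc
  obtain ⟨hcr, hcs⟩ := hcc
  obtain ⟨v₁, hv₁, hlt⟩ := hC2 r s j c hrs hjc
  rcases eq_or_ne v₁ r with h | hne1
  · subst h
    have e1 := ind_self v₁
    have e2 := ind_ne hrs.ne'
    have e3 := ind_ne hjr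
    have e4 := ind_ne hcr
    omega
  rcases eq_or_ne v₁ s with h | hne2
  · subst h
    have hbs1 := hbs hv₁
    have e1 := ind_ne hrs.ne
    have e2 := ind_self v₁
    have e3 := ind_ne hjs
    have e4 : ind c v₁ = 0 := ind_ne fun h => (hcs h) hv₁
    omega
  rcases eq_or_ne v₁ j with h | hne3
  · subst h
    have e1 := ind_ne (Ne.symm hjr)
    have e2 := ind_ne (Ne.symm hjs)
    have e3 := ind_self v₁
    have e4 := ind_ne hjc.ne'
    omega
  rcases eq_or_ne v₁ c with h | hne4
  · subst h
    have hb1 := hcb hv₁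
    have e1 := ind_ne (Ne.symm hcr)
    have e2 : ind s v₁ = 0 := ind_ne fun h => (hcs h.symm) (h ▸ hv₁)
    have e3 := ind_ne hjc.ne
    have e4 := ind_self v₁
    omega
  · have e1 := ind_ne (Ne.symm hne1)
    have e2 := ind_ne (Ne.symm hne2)
    have e3 := ind_ne (Ne.symm hne3)
    have e4 := ind_ne (Ne.symm hne4)
    omega

lemma core_zero_main (hC1 : C1 G F b) (hC2 : C2 G F b) {i j r s : Fin n}
    (hij : G.Adj i j) (hrs : G.Adj r s) (hjF : j ∈ F) (hrF : r ∈ F)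
    (HB : ∀ v ∈ F, ind i v + ind j v + ind r v + ind s v ≤ b v + ind i v) :
    ∃ x y z, G.Adj x y ∧ G.Adj y z ∧ G.Adj x z ∧ x ∈ F ∧ y ∈ F ∧ z ∈ F ∧
      b x = 1 ∧ b y = 1 ∧ b z = 1 ∧ G.Adj i x := by
  have hj := HB j hjF
  have ejj := ind_self j
  have eij : ind i j = 0 := ind_ne hij.ne
  have hbj1 : b j ≤ 1 := bF_le_one hC1 hC2 hjF
  have hbj : b j = 1 := by omega
  have erj : ind r j = 0 := by omega
  have esj : ind s j = 0 := by omega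
  have hjr : j ≠ r := by intro h; subst h; rw [ind_self] at erj; omega
  have hjs : j ≠ s := by intro h; subst h; rw [ind_self] at esj; omega
  have hr := HB r hrF
  have err := ind_self r
  have hbr : b r = 1 := by
    have := bF_le_one hC1 hC2 hrF
    omega
  have hbs : s ∈ F → b s = 1 := by
    intro hsF
    have hs := HB s hsF
    have ess := ind_self s
    have := bF_le_one hC1 hC2 hsF
    omega
  obtain ⟨c, d, hjc, hjd, HB'⟩ := wit_one hC1 hC2 hjF hbj
  have HB'' : ∀ v ∈ F, ind j v + ind d v + ind j v + ind c v ≤ b v + ind j v := by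
    intro v hv; have := HB' v hv; omega
  have hc := target2 hC2 hrs hjc hjF hrF hbj hbr hjr hjs hbs (nbr_b_pos hjc HB')
  have hd := target2 hC2 hrs hjd hjF hrF hbj hbr hjr hjs hbs (nbr_b_pos hjd HB'')
  have hcd : c ≠ d := by
    intro h
    subst h
    have hcF : c ∈ F := by
      rcases hc with rfl | ⟨rfl, hsF⟩
      · exact hrF
      · exact hsF
    have hbc : b c = 1 := by
      rcases hc with rfl | ⟨rfl, hsF⟩
      · exact hbr
      · exact hbs hcF
    have h1 := HB' c hcF
    have e1 := ind_self c
    have e2 : ind j c = 0 := ind_ne hjc.ne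
    omega
  rcases hc with rfl | ⟨rfl, hsF⟩
  · rcases hd with rfl | ⟨rfl, hsF⟩
    · exact absurd rfl hcd
    · exact ⟨j, c, d, hjc, hrs, hjd, hjF, hrF, hsF, hbj, hbr, hbs hsF, hij⟩
  · rcases hd with rfl | ⟨rfl, hsF'⟩
    · exact ⟨j, d, c, hjd, hrs.symm.symm, hjc, hjF, hrF, hsF, hbj, hbr, hbs hsF, hij⟩
    · exact absurd rfl hcd

lemma core_zero (hF : IsVCover G F) (hC1 : C1 G F b) (hC2 : C2 G F b) {i : Fin n}
    (hi : i ∈ graphCore G F) (hbi : b i = 0) :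
    ∃ x y z, G.Adj x y ∧ G.Adj y z ∧ G.Adj x z ∧ x ∈ F ∧ y ∈ F ∧ z ∈ F ∧
      b x = 1 ∧ b y = 1 ∧ b z = 1 ∧ G.Adj i x := by
  obtain ⟨p, q, r, s, hpq, hrs, HB, heq⟩ := wit hC1 hC2 hi.1
  have e1 := ind_pair hpq.ne i
  have e2 := ind_pair hrs.ne i
  by_cases h : ind p i + ind q i = 1
  · obtain ⟨j, hij, hje⟩ := pair_norm hpq h
    have hjF : j ∈ F := hi.2 j hij
    have HBt : ∀ v ∈ F, ind i v + ind j v + ind r v + ind s v ≤ b v + ind i v := by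
      intro v hv
      have h0 := HB v hv
      have h1 := hje v
      omega
    rcases hF hrs with hrF | hsF
    · exact core_zero_main hC1 hC2 hij hrs hjF hrF HBt
    · exact core_zero_main hC1 hC2 hij hrs.symm hjF hsF
        (fun v hv => by have := HBt v hv; omega)
  · obtain ⟨j, hij, hje⟩ := pair_norm hrs (by omega : ind r i + ind s i = 1)
    have hjF : j ∈ F := hi.2 j hij
    have HBt : ∀ v ∈ F, ind i v + ind j v + ind p v + ind q v ≤ b v + ind i v := by
      intro v hv
      have h0 := HB v hv
      have h1 := hje v
      omega
    rcases hF hpq with hpF | hqF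
    · exact core_zero_main hC1 hC2 hij hpq hjF hpF HBt
    · exact core_zero_main hC1 hC2 hij hpq.symm hjF hqF
        (fun v hv => by have := HBt v hv; omega)

lemma meet (hC2 : C2 G F b) {x y u v : Fin n}
    (hxy : G.Adj x y) (huv : G.Adj u v)
    (hxF : x ∈ F) (hyF : y ∈ F) (huF : u ∈ F) (hvF : v ∈ F)
    (hbx : b x = 1) (hby : b y = 1) (hbu : b u = 1) (hbv : b v = 1) :
    x = u ∨ x = v ∨ y = u ∨ y = v := by
  by_contra hcc
  push_neg at hcc
  obtain ⟨h1, h2, h3, h4⟩ := hcc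
  obtain ⟨v₁, hv₁, hlt⟩ := hC2 x y u v hxy huv
  rcases eq_or_ne v₁ x with h | hne1
  · subst h
    have e1 := ind_self v₁
    have e2 := ind_ne hxy.ne'
    have e3 := ind_ne (Ne.symm h1)
    have e4 := ind_ne (Ne.symm h2)
    omega
  rcases eq_or_ne v₁ y with h | hne2
  · subst h
    have e1 := ind_ne hxy.ne
    have e2 := ind_self v₁
    have e3 := ind_ne (Ne.symm h3)
    have e4 := ind_ne (Ne.symm h4)
    omega
  rcases eq_or_ne v₁ u with h | hne3
  · subst h
    have e1 := ind_ne h1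
    have e2 := ind_ne h3
    have e3 := ind_self v₁
    have e4 := ind_ne huv.ne'
    omega
  rcases eq_or_ne v₁ v with h | hne4
  · subst h
    have e1 := ind_ne h2
    have e2 := ind_ne h4
    have e3 := ind_ne huv.ne
    have e4 := ind_self v₁
    omega
  · have e1 := ind_ne (Ne.symm hne1)
    have e2 := ind_ne (Ne.symm hne2)
    have e3 := ind_ne (Ne.symm hne3)
    have e4 := ind_ne (Ne.symm hne4)
    omega

/-- An `S`-edge is contained in any `S`-triangle. -/
lemma sedge_sub (hC2 : C2 G F b) {u v w x y : Fin n}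
    (huv : G.Adj u v) (hvw : G.Adj v w) (huw : G.Adj u w)
    (huF : u ∈ F) (hvF : v ∈ F) (hwF : w ∈ F)
    (hbu : b u = 1) (hbv : b v = 1) (hbw : b w = 1)
    (hxy : G.Adj x y) (hxF : x ∈ F) (hyF : y ∈ F) (hbx : b x = 1) (hby : b y = 1) :
    (x = u ∨ x = v ∨ x = w) ∧ (y = u ∨ y = v ∨ y = w) := by
  have huv' : u ≠ v := huv.ne
  have hvw' : v ≠ w := hvw.ne
  have huw' : u ≠ w := huw.ne
  have m1 := meet hC2 hxy huv hxF hyF huF hvF hbx hby hbu hbv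
  have m2 := meet hC2 hxy hvw hxF hyF hvF hwF hbx hby hbv hbw
  have m3 := meet hC2 hxy huw hxF hyF huF hwF hbx hby hbu hbw
  constructor
  · by_contra hx
    push_neg at hx
    obtain ⟨hxu, hxv, hxw⟩ := hx
    have hy1 : y = u ∨ y = v := by
      rcases m1 with h | h | h | h
      exacts [absurd h hxu, absurd h hxv, Or.inl h, Or.inr h]
    have hy2 : y = v ∨ y = w := by
      rcases m2 with h | h | h | h
      exacts [absurd h hxv, absurd h hxw, Or.inl h, Or.inr h]
    have hy3 : y = u ∨ y = w := by
      rcases m3 with h | h | h | h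
      exacts [absurd h hxu, absurd h hxw, Or.inl h, Or.inr h]
    rcases hy1 with rfl | rfl
    · exact hy2.elim huv' huw'
    · exact hy3.elim (fun h => huv' h.symm) hvw'
  · by_contra hy
    push_neg at hy
    obtain ⟨hyu, hyv, hyw⟩ := hy
    have hx1 : x = u ∨ x = v := by
      rcases m1 with h | h | h | h
      exacts [Or.inl h, Or.inr h, absurd h hyu, absurd h hyv]
    have hx2 : x = v ∨ x = w := by
      rcases m2 with h | h | h | h
      exacts [Or.inl h, Or.inr h, absurd h hyv, absurd h hyw]
    have hx3 : x = u ∨ x = w := by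
      rcases m3 with h | h | h | h
      exacts [Or.inl h, Or.inr h, absurd h hyu, absurd h hyw]
    rcases hx1 with rfl | rfl
    · exact hx2.elim huv' huw'
    · exact hx3.elim (fun h => huv' h.symm) hvw'

lemma mem_closedNbhd_iff {U : Set (Fin n)} {z : Fin n} :
    z ∈ closedNbhd G U ↔ z ∈ U ∨ ∃ t ∈ U, G.Adj t z := Iff.rfl

lemma tri_of_core (hF : IsVCover G F) (hC1 : C1 G F b) (hC2 : C2 G F b) {i : Fin n}
    (hi : i ∈ graphCore G F) :
    ∃ x y z, G.Adj x y ∧ G.Adj y z ∧ G.Adj x z ∧ x ∈ F ∧ y ∈ F ∧ z ∈ F ∧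
      b x = 1 ∧ b y = 1 ∧ b z = 1 ∧ (i = x ∨ G.Adj i x) := by
  have hbi : b i ≤ 1 := bF_le_one hC1 hC2 hi.1
  interval_cases h : b i
  · obtain ⟨x, y, z, a1, a2, a3, f1, f2, f3, b1, b2, b3, hadj⟩ := core_zero hF hC1 hC2 hi h
    exact ⟨x, y, z, a1, a2, a3, f1, f2, f3, b1, b2, b3, Or.inr hadj⟩
  · obtain ⟨x, y, hix, hiy, hxy, hxF, hyF, hbx, hby⟩ := core_one hC1 hC2 hi h
    exact ⟨i, x, y, hix, hxy, hiy, hi.1, hxF, hyF, h, hbx, hby, Or.inl rfl⟩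

theorem comb_to_tri (hF : IsVCover G F) (hC1 : C1 G F b) (hC2 : C2 G F b) :
    TriOK G F := by
  by_cases hc : graphCore G F = ∅
  · exact Or.inl hc
  obtain ⟨i₀, hi₀⟩ := Set.nonempty_iff_ne_empty.mpr hc
  obtain ⟨u, v, w, huv, hvw, huw, huF, hvF, hwF, hbu, hbv, hbw, -⟩ :=
    tri_of_core hF hC1 hC2 hi₀
  refine Or.inr ⟨u, v, w, huv, hvw, huw, ?_, ?_⟩
  · -- closedNbhd ⊆ F
    intro z hz
    rcases hz with hz | ⟨t, ht, htz⟩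
    · simp only [Set.mem_insert_iff, Set.mem_singleton_iff] at hz
      rcases hz with rfl | rfl | rfl <;> assumption
    · by_contra hzF
      have hzu : z ≠ u := fun h => hzF (h ▸ huF)
      have hzv : z ≠ v := fun h => hzF (h ▸ hvF)
      have hzw : z ≠ w := fun h => hzF (h ▸ hwF)
      simp only [Set.mem_insert_iff, Set.mem_singleton_iff] at ht
      have key : ∀ t₂ t₃, G.Adj t z → G.Adj t₂ t₃ → t₂ ∈ F → t₃ ∈ F →
          b t₂ = 1 → b t₃ = 1 → t ∈ F → b t = 1 → t₂ ≠ t → t₃ ≠ t → False := by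
        intro t₂ t₃ htz' h23 h2F h3F hb2 hb3 htF hbt h2t h3t
        obtain ⟨v₁, hv₁, hlt⟩ := hC2 t z t₂ t₃ htz' h23
        have hzv₁ : z ≠ v₁ := fun h => hzF (h ▸ hv₁)
        have ez := ind_ne hzv₁
        rcases eq_or_ne v₁ t with h | hn1
        · subst h
          have e1 := ind_self v₁
          have e2 := ind_ne h2t
          have e3 := ind_ne h3t
          omega
        rcases eq_or_ne v₁ t₂ with h | hn2
        · subst h
          have e1 := ind_ne (Ne.symm h2t)
          have e1' : ind t v₁ = 0 := ind_ne (Ne.symm h2t)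
          have e2 := ind_self v₁
          have e3 := ind_ne h23.ne'
          omega
        rcases eq_or_ne v₁ t₃ with h | hn3
        · subst h
          have e1 : ind t v₁ = 0 := ind_ne (Ne.symm h3t)
          have e2 := ind_ne h23.ne
          have e3 := ind_self v₁
          omega
        · have e1 := ind_ne (Ne.symm hn1)
          have e2 := ind_ne (Ne.symm hn2)
          have e3 := ind_ne (Ne.symm hn3)
          omega
      rcases ht with rfl | rfl | rfl
      · exact key v w htz hvw hvF hwF hbv hbw huF hbu (Ne.symm huv.ne) (Ne.symm huw.ne)
      · exact key u w htz huw huF hwF hbu hbw hvF hbv huv.ne hvw.ne'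
      · exact key u v htz huv huF hvF hbu hbv hwF hbw huw.ne hvw.ne
  · -- core ⊆ closedNbhd
    intro i hi
    obtain ⟨x, y, z, a1, a2, a3, f1, f2, f3, b1, b2, b3, hix⟩ := tri_of_core hF hC1 hC2 hi
    have hx3 := (sedge_sub hC2 huv hvw huw huF hvF hwF hbu hbv hbw a1 f1 f2 b1 b2).1
    rcases hix with rfl | hadj
    · exact Or.inl (by simp only [Set.mem_insert_iff, Set.mem_singleton_iff]; exact hx3)
    · exact Or.inr ⟨x, by simp only [Set.mem_insert_iff, Set.mem_singleton_iff]; exact hx3,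
        hadj.symm⟩

lemma exists_F_end (hF : IsVCover G F) {p q : Fin n} (h : G.Adj p q) :
    ∃ x, x ∈ F ∧ (x = p ∨ x = q) := by
  rcases hF h with hp | hq
  · exact ⟨p, hp, Or.inl rfl⟩
  · exact ⟨q, hq, Or.inr rfl⟩

lemma comb_of_core_empty (hF : IsVCover G F) (hc : graphCore G F = ∅) :
    ∃ b : Fin n → ℕ, C1 G F b ∧ C2 G F b := by
  have hno : ∀ i ∈ F, ∃ j, G.Adj i j ∧ j ∉ F := by
    intro i hi
    by_contra h
    push_neg at h
    have : i ∈ graphCore G F := ⟨hi, h⟩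
    rw [hc] at this
    exact this
  rcases Set.eq_empty_or_nonempty F with hFe | ⟨i₀, hi₀⟩
  · refine ⟨fun _ => 0, ?_, ?_⟩
    · intro i hi
      rw [hFe] at hi
      exact absurd hi (Set.notMem_empty i)
    · intro p q r s hpq hrs
      rcases hF hpq with hp | hq
      · rw [hFe] at hp; exact absurd hp (Set.notMem_empty p)
      · rw [hFe] at hq; exact absurd hq (Set.notMem_empty q)
  · obtain ⟨j₀, hj₀, hj₀F⟩ := hno i₀ hi₀
    refine ⟨ind i₀, ?_, ?_⟩
    · intro i hi
      obtain ⟨j, hj, hjF⟩ := hno i hi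
      refine ⟨i, j, i₀, j₀, hj, hj₀, fun v hv => ?_⟩
      have e1 : ind j v = 0 := ind_ne fun h => hjF (h ▸ hv)
      have e2 : ind j₀ v = 0 := ind_ne fun h => hj₀F (h ▸ hv)
      omega
    · intro p q r s hpq hrs
      obtain ⟨x, hxF, hxe⟩ := exists_F_end hF hpq
      obtain ⟨y, hyF, hye⟩ := exists_F_end hF hrs
      by_cases hxi : x = i₀
      · by_cases hyi : y = i₀
        · refine ⟨i₀, hi₀, ?_⟩
          have e0 := ind_self i₀
          have e1 : ind p i₀ + ind q i₀ ≥ 1 := by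
            rcases hxe with rfl | rfl
            · rw [hxi, ind_self]; omega
            · rw [hxi, ind_self]; omega
          have e2 : ind r i₀ + ind s i₀ ≥ 1 := by
            rcases hye with rfl | rfl
            · rw [hyi, ind_self]; omega
            · rw [hyi, ind_self]; omega
          omega
        · refine ⟨y, hyF, ?_⟩
          have e0 : ind i₀ y = 0 := ind_ne fun h => hyi h.symm
          have e2 : ind r y + ind s y ≥ 1 := by
            rcases hye with rfl | rfl
            · rw [ind_self]; omega
            · rw [ind_self]; omega
          omega
      · refine ⟨x, hxF, ?_⟩
        have e0 : ind i₀ x = 0 := ind_ne fun h => hxi h.symm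
        have e1 : ind p x + ind q x ≥ 1 := by
          rcases hxe with rfl | rfl
          · rw [ind_self]; omega
          · rw [ind_self]; omega
        omega

lemma count3 {u v w x : Fin n} (huv : u ≠ v) (huw : u ≠ w) (hvw : v ≠ w)
    (hx : x = u ∨ x = v ∨ x = w) : ind x u + ind x v + ind x w = 1 := by
  rcases hx with rfl | rfl | rfl
  · rw [ind_self, ind_ne huv, ind_ne huw]
  · rw [ind_self, ind_ne (Ne.symm huv), ind_ne hvw]
  · rw [ind_self, ind_ne (Ne.symm huw), ind_ne (Ne.symm hvw)]

lemma comb_of_tri (hF : IsVCover G F) {u v w : Fin n}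
    (huv : G.Adj u v) (hvw : G.Adj v w) (huw : G.Adj u w)
    (hN : closedNbhd G {u, v, w} ⊆ F)
    (hcore : graphCore G F ⊆ closedNbhd G {u, v, w}) :
    ∃ b : Fin n → ℕ, C1 G F b ∧ C2 G F b := by
  have hmemT : ∀ x, (x = u ∨ x = v ∨ x = w) → x ∈ closedNbhd G {u, v, w} := by
    intro x hx
    exact Or.inl (by simp only [Set.mem_insert_iff, Set.mem_singleton_iff]; exact hx)
  have huF : u ∈ F := hN (hmemT u (Or.inl rfl))
  have hvF : v ∈ F := hN (hmemT v (Or.inr (Or.inl rfl)))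
  have hwF : w ∈ F := hN (hmemT w (Or.inr (Or.inr rfl)))
  have adjT_F : ∀ z t, (t = u ∨ t = v ∨ t = w) → G.Adj t z → z ∈ F := by
    intro z t ht hadj
    refine hN (Or.inr ⟨t, ?_, hadj⟩)
    simp only [Set.mem_insert_iff, Set.mem_singleton_iff]
    exact ht
  refine ⟨fun x => ind u x + ind v x + ind w x, ?_, ?_⟩
  · intro i hi
    rcases eq_or_ne i u with hiu | hiu
    · refine ⟨i, v, i, w, ?_, ?_, fun x _ => by rw [hiu]; beta_reduce; omega⟩
      · rw [hiu]; exact huv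
      · rw [hiu]; exact huw
    rcases eq_or_ne i v with hiv | hiv
    · refine ⟨i, u, i, w, ?_, ?_, fun x _ => by rw [hiv]; beta_reduce; omega⟩
      · rw [hiv]; exact huv.symm
      · rw [hiv]; exact hvw
    rcases eq_or_ne i w with hiw | hiw
    · refine ⟨i, u, i, v, ?_, ?_, fun x _ => by rw [hiw]; beta_reduce; omega⟩
      · rw [hiw]; exact huw.symm
      · rw [hiw]; exact hvw.symm
    by_cases hA : G.Adj u i
    · exact ⟨u, i, v, w, hA, hvw, fun x _ => by beta_reduce; omega⟩
    by_cases hB : G.Adj v i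
    · exact ⟨v, i, u, w, hB, huw, fun x _ => by beta_reduce; omega⟩
    by_cases hC : G.Adj w i
    · exact ⟨w, i, u, v, hC, huv, fun x _ => by beta_reduce; omega⟩
    · have hic : i ∉ graphCore G F := by
        intro hmem
        rcases hcore hmem with hin | ⟨t, ht, hti⟩
        · simp only [Set.mem_insert_iff, Set.mem_singleton_iff] at hin
          rcases hin with rfl | rfl | rfl
          · exact hiu rfl
          · exact hiv rfl
          · exact hiw rfl
        · simp only [Set.mem_insert_iff, Set.mem_singleton_iff] at ht
          rcases ht with rfl | rfl | rfl
          · exact hA hti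
          · exact hB hti
          · exact hC hti
      have hj : ∃ j, G.Adj i j ∧ j ∉ F := by
        by_contra h
        push_neg at h
        exact hic ⟨hi, h⟩
      obtain ⟨j, hij, hjF⟩ := hj
      refine ⟨i, j, u, v, hij, huv, fun x hx => ?_⟩
      have e1 : ind j x = 0 := ind_ne fun h => hjF (h ▸ hx)
      beta_reduce
      omega
  · intro p q r s hpq hrs
    by_contra hcc
    push_neg at hcc
    have hcc' : ∀ z ∈ F, ind p z + ind q z + ind r z + ind s z ≤
        ind u z + ind v z + ind w z := fun z hz => by have := hcc z hz; beta_reduce at this; omega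
    have memF_T : ∀ z, z ∈ F → ((z = p ∨ z = q) ∨ (z = r ∨ z = s)) →
        (z = u ∨ z = v ∨ z = w) := by
      intro z hzF hze
      have h := hcc' z hzF
      have e0 := ind_self z
      have hbz : 1 ≤ ind u z + ind v z + ind w z := by
        rcases hze with (rfl | rfl) | (rfl | rfl) <;> omega
      rcases ind_cases u z with ⟨h1, e1⟩ | ⟨h1, e1⟩
      · exact Or.inl h1.symm
      rcases ind_cases v z with ⟨h2, e2⟩ | ⟨h2, e2⟩
      · exact Or.inr (Or.inl h2.symm)
      rcases ind_cases w z with ⟨h3, e3⟩ | ⟨h3, e3⟩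
      · exact Or.inr (Or.inr h3.symm)
      · omega
    have hboth : ∀ x y, G.Adj x y → ((x = p ∨ x = q) ∨ (x = r ∨ x = s)) →
        ((y = p ∨ y = q) ∨ (y = r ∨ y = s)) →
        (x = u ∨ x = v ∨ x = w) ∧ (y = u ∨ y = v ∨ y = w) := by
      intro x y hxy hxe hye
      rcases hF hxy with hxF | hyF
      · have hxT := memF_T x hxF hxe
        have hyF' : y ∈ F := adjT_F y x hxT hxy
        exact ⟨hxT, memF_T y hyF' hye⟩
      · have hyT := memF_T y hyF hye
        have hxF' : x ∈ F := adjT_F x y hyT hxy.symm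
        exact ⟨memF_T x hxF' hxe, hyT⟩
    obtain ⟨hpT, hqT⟩ := hboth p q hpq (Or.inl (Or.inl rfl)) (Or.inl (Or.inr rfl))
    obtain ⟨hrT, hsT⟩ := hboth r s hrs (Or.inr (Or.inl rfl)) (Or.inr (Or.inr rfl))
    have hu := hcc' u huF
    have hv := hcc' v hvF
    have hw := hcc' w hwF
    have cp := count3 huv.ne huw.ne hvw.ne hpT
    have cq := count3 huv.ne huw.ne hvw.ne hqT
    have cr := count3 huv.ne huw.ne hvw.ne hrT
    have cs := count3 huv.ne huw.ne hvw.ne hsT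
    have cu := count3 huv.ne huw.ne hvw.ne (Or.inl rfl)
    have cv := count3 huv.ne huw.ne hvw.ne (Or.inr (Or.inl rfl))
    have cw := count3 huv.ne huw.ne hvw.ne (Or.inr (Or.inr rfl))
    omega

theorem comb_main {G : SimpleGraph (Fin n)} {F : Set (Fin n)} (hF : IsVCover G F) :
    (∃ b : Fin n → ℕ, C1 G F b ∧ C2 G F b) ↔ TriOK G F := by
  constructor
  · rintro ⟨b, h1, h2⟩
    exact comb_to_tri hF h1 h2
  · rintro (hc | ⟨u, v, w, h1, h2, h3, hN, hcore⟩)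
    · exact comb_of_core_empty hF hc
    · exact comb_of_tri hF h1 h2 h3 hN hcore

end S15
theorem stmt15 {n : ℕ} (k : Type*) [Field k] (G : SimpleGraph (Fin n))
    (F : Set (Fin n)) (hF : IsVCover G F) :
    assocPrime ((edgeIdeal k G) ^ 2) (varIdeal k F) ↔
      (IsMinimalVCover G F ∨
        ∃ u v w : Fin n, G.Adj u v ∧ G.Adj v w ∧ G.Adj u w ∧
          MinimalCoverOver G (closedNbhd G {u, v, w}) F) := by
  rw [S15.assocPrime_iff, and_iff_right (S15.varIdeal_prime k F),
    S15.witness_iff, S15.cond_iff_comb, S15.comb_main hF, S15.triOK_iff hF]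
end
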